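/- arXiv:1502.07084 — 9 statements merged into one kernel-verified Lean document; each statement's English description precedes it below -/
import Mathlib

section
/- Let X and Y be real Banach spaces with Y strictly convex. Suppose that for every x₀ ∈ X with ‖x₀‖ = 1, the closed linear span of the set { z ∈ X : ‖x₀ + z‖ ≤ 1 and ‖x₀ − z‖ ≤ 1 } is a finite-codimensional subspace of X. Then every norm attaining bounded linear operator T : X → Y has finite rank (i.e., its range is a finite-dimensional subspace of Y). -/
/-- A bounded linear operator attains its norm if there is a norm-one vector where
the operator norm is achieved. -/
def NormAttaining {X Y : Type*} [NormedAddCommGroup X] [NormedSpace ℝ X]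
    [NormedAddCommGroup Y] [NormedSpace ℝ Y] (T : X →L[ℝ] Y) : Prop :=
  ∃ x : X, ‖x‖ = 1 ∧ ‖T x‖ = ‖T‖

theorem stmt_0 (X Y : Type*) [NormedAddCommGroup X] [NormedSpace ℝ X] [CompleteSpace X]
    [NormedAddCommGroup Y] [NormedSpace ℝ Y] [CompleteSpace Y] [StrictConvexSpace ℝ Y]
    (hX : ∀ x₀ : X, ‖x₀‖ = 1 →
      FiniteDimensional ℝ
        (X ⧸ (Submodule.span ℝ {z : X | ‖x₀ + z‖ ≤ 1 ∧ ‖x₀ - z‖ ≤ 1}).topologicalClosure))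
    (T : X →L[ℝ] Y) (hT : NormAttaining T) :
    FiniteDimensional ℝ (LinearMap.range (T : X →ₗ[ℝ] Y)) := by
  obtain ⟨x₀, hx₀, hTx₀⟩ := hT
  set N := (Submodule.span ℝ {z : X | ‖x₀ + z‖ ≤ 1 ∧ ‖x₀ - z‖ ≤ 1}).topologicalClosure
  have hker : N ≤ LinearMap.ker (T : X →ₗ[ℝ] Y) := by
    have hclosed : IsClosed (LinearMap.ker (T : X →ₗ[ℝ] Y) : Set X) := by
      exact ContinuousLinearMap.isClosed_ker T
    refine Submodule.topologicalClosure_minimal _ (Submodule.span_le.2 ?_) hclosed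
    rintro z ⟨h1, h2⟩
    have ha : ‖T (x₀ + z)‖ ≤ ‖T‖ := by
      calc ‖T (x₀ + z)‖ ≤ ‖T‖ * ‖x₀ + z‖ := T.le_opNorm _
        _ ≤ ‖T‖ * 1 := by gcongr
        _ = ‖T‖ := mul_one _
    have hb : ‖T (x₀ - z)‖ ≤ ‖T‖ := by
      calc ‖T (x₀ - z)‖ ≤ ‖T‖ * ‖x₀ - z‖ := T.le_opNorm _
        _ ≤ ‖T‖ * 1 := by gcongr
        _ = ‖T‖ := mul_one _
    have hsum : T (x₀ + z) + T (x₀ - z) = T x₀ + T x₀ := by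
      rw [← map_add, ← map_add]; congr 1; abel
    have hnsum : ‖T (x₀ + z) + T (x₀ - z)‖ = 2 * ‖T‖ := by
      rw [hsum, ← hTx₀, ← two_smul ℝ (T x₀), norm_smul]; simp
    have hea : ‖T (x₀ + z)‖ = ‖T‖ ∧ ‖T (x₀ - z)‖ = ‖T‖ := by
      have htri := norm_add_le (T (x₀ + z)) (T (x₀ - z))
      constructor <;> linarith
    have heq : T (x₀ + z) = T (x₀ - z) := by
      apply eq_of_norm_eq_of_norm_add_eq (hea.1.trans hea.2.symm)
      rw [hnsum, hea.1, hea.2]; ring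
    have : T z = 0 := by
      have h := sub_eq_zero.2 heq
      rw [← map_sub] at h
      have he : (x₀ + z) - (x₀ - z) = z + z := by abel
      rw [he, map_add] at h
      rw [← two_smul ℝ (T z)] at h; simpa using h
    simpa [LinearMap.mem_ker] using this
  have := hX x₀ hx₀
  let f : (X ⧸ N) →ₗ[ℝ] Y := N.liftQ (T : X →ₗ[ℝ] Y) hker
  have hr : LinearMap.range (T : X →ₗ[ℝ] Y) = LinearMap.range f := by
    rw [Submodule.range_liftQ]
  rw [hr]
  infer_instance
end

section
/- Let X be a closed subspace of c₀. Then for every x₀ ∈ X with ‖x₀‖ = 1, the closed linear span of the set { z ∈ X : ‖x₀ + z‖ ≤ 1 and ‖x₀ − z‖ ≤ 1 } is a finite-codimensional subspace of X. -/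
open scoped ZeroAtInfty

/-- Let `X` be a closed subspace of `c₀`, the Banach space of real sequences converging to zero
with the supremum norm (realized in Mathlib as `C₀(ℕ, ℝ)`, zero-at-infinity continuous maps on
the discrete space `ℕ`).  We encode this by a linear isometric embedding `J : X → c₀` with closed
range.  Then for every `x₀ ∈ X` with `‖x₀‖ = 1`, the closed linear span of the set
`{ z ∈ X : ‖x₀ + z‖ ≤ 1 ∧ ‖x₀ - z‖ ≤ 1 }` is a finite-codimensional subspace of `X`,
i.e. the quotient of `X` by it is finite-dimensional. -/
theorem stmt_1 (X : Type*) [NormedAddCommGroup X] [NormedSpace ℝ X] [CompleteSpace X]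
    (J : X →ₗᵢ[ℝ] C₀(ℕ, ℝ)) (hJ : IsClosed (Set.range J))
    (x₀ : X) (hx₀ : ‖x₀‖ = 1) :
    FiniteDimensional ℝ
      (X ⧸ (Submodule.span ℝ {z : X | ‖x₀ + z‖ ≤ 1 ∧ ‖x₀ - z‖ ≤ 1}).topologicalClosure) := by
  classical
  set y : C₀(ℕ, ℝ) := J x₀ with hy
  -- the finite set where |y n| > 1/2
  have hfin : {n : ℕ | (1:ℝ)/2 < |y n|}.Finite := by
    have h := ZeroAtInftyContinuousMapClass.zero_at_infty (α := ℕ) y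
    rw [Filter.cocompact_eq_cofinite] at h
    have h2 : ∀ᶠ n in Filter.cofinite, |y n| < 1/2 := by
      have := h.eventually (Metric.ball_mem_nhds (0:ℝ) (by norm_num : (0:ℝ) < 1/2))
      simpa [Real.dist_eq] using this
    have := h2.mono (fun n hn => not_lt.mpr hn.le)
    simpa using (Filter.eventually_cofinite.mp (h2.mono fun n hn => not_lt.mpr hn.le))
  set F : Finset ℕ := hfin.toFinset with hF
  -- the linear map X → (F → ℝ)
  let φ : X →ₗ[ℝ] (F → ℝ) :=
    { toFun := fun z n => J z n
      map_add' := by intro a b; ext n; simp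
      map_smul' := by intro c a; ext n; simp }
  have hφfd : FiniteDimensional ℝ (X ⧸ LinearMap.ker φ) :=
    LinearEquiv.finiteDimensional (LinearMap.quotKerEquivRange φ).symm
  -- norm bound helper
  have norm_le_iff : ∀ (f : C₀(ℕ, ℝ)), (∀ n, |f n| ≤ 1) → ‖f‖ ≤ 1 := by
    intro f hf
    rw [← ZeroAtInftyContinuousMap.norm_toBCF_eq_norm]
    exact BoundedContinuousFunction.norm_le (by norm_num) |>.mpr (by simpa using hf)
  -- ker φ ≤ span of the set
  have hker : LinearMap.ker φ ≤ Submodule.span ℝ {z : X | ‖x₀ + z‖ ≤ 1 ∧ ‖x₀ - z‖ ≤ 1} := by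
    intro z hz
    rcases eq_or_ne z 0 with rfl | hz0
    · exact Submodule.zero_mem _
    · have hnz : (2 * ‖z‖ : ℝ) ≠ 0 := mul_ne_zero two_ne_zero (norm_ne_zero_iff.mpr hz0)
      have hmem : (2 * ‖z‖ : ℝ)⁻¹ • z ∈ {z : X | ‖x₀ + z‖ ≤ 1 ∧ ‖x₀ - z‖ ≤ 1} := by
        set w : X := (2 * ‖z‖ : ℝ)⁻¹ • z with hw
        have hwn : ‖w‖ = 1/2 := by
          rw [hw, norm_smul]
          simp only [norm_inv, Real.norm_eq_abs]
          rw [abs_of_pos (by positivity)]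
          field_simp
        have hwF : ∀ n ∈ F, (J w) n = 0 := by
          intro n hn
          have : (J z) n = 0 := by
            have := congrFun (LinearMap.mem_ker.mp hz) ⟨n, hn⟩
            exact this
          rw [hw]
          simp [this]
        have key : ∀ (s : ℝ), |s| = 1 → ‖x₀ + s • w‖ ≤ 1 := by
          intro s hs
          have : ‖J (x₀ + s • w)‖ ≤ 1 := by
            apply norm_le_iff
            intro n
            have heq : (J (x₀ + s • w)) n = y n + s * (J w) n := by simp [hy]
            rw [heq]
            by_cases hn : n ∈ F
            · rw [hwF n hn]
              have : |y n| ≤ ‖y‖ := by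
                rw [← ZeroAtInftyContinuousMap.norm_toBCF_eq_norm]
                exact BoundedContinuousFunction.norm_coe_le_norm y.toBCF n
              simpa [hy, J.norm_map, hx₀] using this
            · have h1 : |y n| ≤ 1/2 := by
                have h1' : ¬ ((1:ℝ)/2 < |y n|) := fun h => hn (hfin.mem_toFinset.mpr h)
                exact not_lt.mp h1'
              have h2 : |(J w) n| ≤ ‖J w‖ := by
                rw [← ZeroAtInftyContinuousMap.norm_toBCF_eq_norm]
                exact BoundedContinuousFunction.norm_coe_le_norm (J w).toBCF n
              rw [J.norm_map, hwn] at h2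
              calc |y n + s * (J w) n| ≤ |y n| + |s * (J w) n| := abs_add_le _ _
                _ = |y n| + |(J w) n| := by rw [abs_mul, hs, one_mul]
                _ ≤ 1/2 + 1/2 := add_le_add h1 h2
                _ = 1 := by norm_num
          rwa [J.norm_map] at this
        constructor
        · simpa using key 1 (by norm_num)
        · have := key (-1) (by norm_num)
          simpa [sub_eq_add_neg] using this
      have : z = (2 * ‖z‖ : ℝ) • ((2 * ‖z‖ : ℝ)⁻¹ • z) := (smul_inv_smul₀ hnz z).symm
      rw [this]
      exact Submodule.smul_mem _ _ (Submodule.subset_span hmem)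
  have hle : LinearMap.ker φ ≤
      (Submodule.span ℝ {z : X | ‖x₀ + z‖ ≤ 1 ∧ ‖x₀ - z‖ ≤ 1}).topologicalClosure :=
    hker.trans (Submodule.le_topologicalClosure _)
  have hsurj : Function.Surjective
      (Submodule.mapQ (LinearMap.ker φ) _ LinearMap.id (by simpa using hle)) := by
    rintro ⟨x⟩
    exact ⟨Submodule.Quotient.mk x, rfl⟩
  exact Module.Finite.of_surjective _ hsurj
end

section
/- Let X be a closed subspace of c₀ and let Y be a strictly convex real Banach space. Then every norm attaining bounded linear operator T : X → Y has finite rank (i.e., its range is a finite-dimensional subspace of Y). -/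
open scoped ZeroAtInfty

/-- Let `X` be a closed subspace of `c₀` (real sequences converging to zero with the sup norm,
realized as `C₀(ℕ, ℝ)`), encoded by a linear isometric embedding `J : X → c₀` with closed range,
and let `Y` be a strictly convex real Banach space.  Then every norm attaining bounded linear
operator `T : X → Y` has finite rank. -/
theorem stmt_2 (X : Type*) [NormedAddCommGroup X] [NormedSpace ℝ X] [CompleteSpace X]
    (J : X →ₗᵢ[ℝ] C₀(ℕ, ℝ)) (hJ : IsClosed (Set.range J))
    (Y : Type*) [NormedAddCommGroup Y] [NormedSpace ℝ Y] [CompleteSpace Y]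
    [StrictConvexSpace ℝ Y]
    (T : X →L[ℝ] Y) (hT : NormAttaining T) :
    FiniteDimensional ℝ (LinearMap.range (T : X →ₗ[ℝ] Y)) := by
  classical
  obtain ⟨x, hx1, hxT⟩ := hT
  by_cases hT0 : T = 0
  · subst hT0
    have h : LinearMap.range ((0 : X →L[ℝ] Y) : X →ₗ[ℝ] Y) = ⊥ := by
      ext y; simp [LinearMap.mem_range, eq_comm]
    rw [h]; infer_instance
  have hTpos : 0 < ‖T‖ := norm_pos_iff.mpr hT0
  -- the set where |J x| is at least 1/2 is finite
  set f : C₀(ℕ, ℝ) := J x with hf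
  have htend : Filter.Tendsto f (Filter.cofinite) (nhds 0) := by
    simpa [Filter.cocompact_eq_cofinite, Nat.cofinite_eq_atTop] using zero_at_infty f
  have hFfin : {n : ℕ | (1:ℝ)/2 ≤ |f n|}.Finite := by
    have := htend.eventually (Metric.ball_mem_nhds (0:ℝ) (by norm_num : (0:ℝ) < 1/2))
    rw [Filter.eventually_cofinite] at this
    refine this.subset ?_
    intro n hn
    simp only [Set.mem_setOf_eq, Metric.mem_ball, dist_zero_right, Real.norm_eq_abs, not_lt]
    exact hn
  set F : Finset ℕ := hFfin.toFinset with hFdef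
  -- the finite-rank "coordinate" map
  let φ : X →ₗ[ℝ] (F → ℝ) :=
    { toFun := fun z n => J z n
      map_add' := by intro a b; ext n; simp
      map_smul' := by intro c a; ext n; simp }
  -- key step: T vanishes on ker φ
  have key : ∀ w : X, ‖w‖ ≤ 1/2 → (∀ n ∈ F, J w n = 0) → T w = 0 := by
    intro w hw hw0
    have hxw : ∀ (s : ℝ), |s| = 1 → ‖x + s • w‖ ≤ 1 := by
      intro s hs
      rw [← J.norm_map]
      rw [← ZeroAtInftyContinuousMap.norm_toBCF_eq_norm]
      refine (BoundedContinuousFunction.norm_le (by norm_num)).2 ?_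
      intro n
      simp only [map_add, map_smul]
      by_cases hn : n ∈ F
      · have : J w n = 0 := hw0 n hn
        simp only [ZeroAtInftyContinuousMap.toBCF_apply, ZeroAtInftyContinuousMap.coe_add,
          ZeroAtInftyContinuousMap.coe_smul, Pi.add_apply, Pi.smul_apply, this, smul_zero,
          add_zero, Real.norm_eq_abs]
        calc |f n| ≤ ‖f‖ := by
              rw [← ZeroAtInftyContinuousMap.norm_toBCF_eq_norm]
              exact (f.toBCF).norm_coe_le_norm n
          _ = 1 := by rw [hf, J.norm_map, hx1]
      · have h1 : |f n| < 1/2 := by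
          by_contra h
          exact hn (by simpa [hFdef] using (not_lt.1 h))
        have h2 : |J w n| ≤ 1/2 := by
          calc |J w n| ≤ ‖J w‖ := by
                rw [← ZeroAtInftyContinuousMap.norm_toBCF_eq_norm]
                exact ((J w).toBCF).norm_coe_le_norm n
            _ = ‖w‖ := J.norm_map w
            _ ≤ 1/2 := hw
        simp only [ZeroAtInftyContinuousMap.toBCF_apply, ZeroAtInftyContinuousMap.coe_add,
          ZeroAtInftyContinuousMap.coe_smul, Pi.add_apply, Pi.smul_apply, Real.norm_eq_abs]
        calc |f n + s • J w n| ≤ |f n| + |s • J w n| := abs_add_le _ _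
          _ = |f n| + |J w n| := by rw [smul_eq_mul, abs_mul, hs, one_mul]
          _ ≤ 1/2 + 1/2 := by linarith
          _ = 1 := by norm_num
    set a := T (x + w) with ha
    set b := T (x - w) with hb
    have hab : a + b = T x + T x := by
      rw [ha, hb, ← map_add]
      have : x + w + (x - w) = x + x := by abel
      rw [this, map_add]
    have hna : ‖a‖ ≤ ‖T‖ := by
      calc ‖a‖ ≤ ‖T‖ * ‖x + w‖ := T.le_opNorm _
        _ ≤ ‖T‖ * 1 := by
            refine mul_le_mul_of_nonneg_left ?_ (norm_nonneg T)
            simpa using hxw 1 (by norm_num)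
        _ = ‖T‖ := mul_one _
    have hnb : ‖b‖ ≤ ‖T‖ := by
      calc ‖b‖ ≤ ‖T‖ * ‖x - w‖ := T.le_opNorm _
        _ ≤ ‖T‖ * 1 := by
            refine mul_le_mul_of_nonneg_left ?_ (norm_nonneg T)
            have := hxw (-1) (by norm_num)
            simpa [sub_eq_add_neg] using this
        _ = ‖T‖ := mul_one _
    have hsum : ‖a + b‖ = 2 * ‖T‖ := by
      rw [hab, ← two_smul ℝ, norm_smul, hxT]
      simp
    have haeq : ‖a‖ = ‖T‖ := by
      by_contra h
      have : ‖a‖ < ‖T‖ := lt_of_le_of_ne hna h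
      have := norm_add_le a b
      linarith
    have hbeq : ‖b‖ = ‖T‖ := by
      by_contra h
      have : ‖b‖ < ‖T‖ := lt_of_le_of_ne hnb h
      have := norm_add_le a b
      linarith
    have hab2 : a = b :=
      eq_of_norm_eq_of_norm_add_eq (haeq.trans hbeq.symm) (by rw [hsum, haeq, hbeq]; ring)
    have h2 : a - b = T w + T w := by
      rw [ha, hb, ← map_sub]
      have : x + w - (x - w) = w + w := by abel
      rw [this, map_add]
    rw [hab2, sub_self] at h2
    have h3 : (2:ℝ) • T w = 0 := by rw [two_smul]; exact h2.symm
    exact (smul_eq_zero_iff_right (by norm_num : (2:ℝ) ≠ 0)).mp h3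
  have hker : LinearMap.ker φ ≤ LinearMap.ker (T : X →ₗ[ℝ] Y) := by
    intro z hz
    simp only [LinearMap.mem_ker] at hz ⊢
    have hz' : ∀ n ∈ F, J z n = 0 := by
      intro n hn
      have := congrFun hz ⟨n, hn⟩
      simpa [φ] using this
    by_cases hz0 : z = 0
    · simp [hz0]
    · have hnz : (0:ℝ) < ‖z‖ := norm_pos_iff.mpr hz0
      set c : ℝ := (2 * ‖z‖)⁻¹ with hc
      have hcpos : 0 < c := by positivity
      have h1 : ‖c • z‖ ≤ 1/2 := by
        rw [norm_smul, Real.norm_eq_abs, abs_of_pos hcpos, hc]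
        rw [inv_mul_le_iff₀ (by positivity)]
        ring_nf
        nlinarith
      have h2 : ∀ n ∈ F, J (c • z) n = 0 := by
        intro n hn
        simp [map_smul, hz' n hn]
      have := key (c • z) h1 h2
      rw [map_smul] at this
      have := (smul_eq_zero_iff_right (ne_of_gt hcpos)).mp this
      simpa using this
  -- conclude finite rank
  have hfd : FiniteDimensional ℝ (X ⧸ LinearMap.ker φ) :=
    LinearEquiv.finiteDimensional φ.quotKerEquivRange.symm
  let Tbar : (X ⧸ LinearMap.ker φ) →ₗ[ℝ] Y :=
    (LinearMap.ker φ).liftQ (T : X →ₗ[ℝ] Y) hker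
  have hr : LinearMap.range Tbar = LinearMap.range (T : X →ₗ[ℝ] Y) :=
    Submodule.range_liftQ _ _ _
  have : FiniteDimensional ℝ (LinearMap.range (T : X →ₗ[ℝ] Y)) := by
    rw [← hr]; infer_instance
  exact this
end

section
/- Let X be a real Banach space whose norm locally depends upon finitely many coordinates and let Y be a strictly convex real Banach space. Then every norm attaining bounded linear operator T : X → Y has finite rank (i.e., its range is a finite-dimensional subspace of Y). -/
/-- The norm of `X` locally depends upon finitely many coordinates: for every `x ≠ 0` there are
`ε > 0`, finitely many continuous linear functionals `f₁, …, fₙ` and a continuous function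
`φ : ℝⁿ → ℝ` such that `‖y‖ = φ (f₁ y, …, fₙ y)` whenever `‖x - y‖ < ε`. -/
def NormLocallyDependsOnFinitelyManyCoordinates (X : Type*) [NormedAddCommGroup X]
    [NormedSpace ℝ X] : Prop :=
  ∀ x : X, x ≠ 0 → ∃ (ε : ℝ), 0 < ε ∧ ∃ (n : ℕ) (f : Fin n → X →L[ℝ] ℝ)
    (φ : (Fin n → ℝ) → ℝ), Continuous φ ∧
      ∀ y : X, ‖x - y‖ < ε → ‖y‖ = φ (fun i => f i y)

/-- If the norm of the real Banach space `X` locally depends upon finitely many coordinates and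
`Y` is a strictly convex real Banach space, then every norm attaining bounded linear operator
`T : X → Y` has finite rank. -/
theorem stmt_5 (X : Type*) [NormedAddCommGroup X] [NormedSpace ℝ X] [CompleteSpace X]
    (hX : NormLocallyDependsOnFinitelyManyCoordinates X)
    (Y : Type*) [NormedAddCommGroup Y] [NormedSpace ℝ Y] [CompleteSpace Y]
    [StrictConvexSpace ℝ Y]
    (T : X →L[ℝ] Y) (hT : NormAttaining T) :
    FiniteDimensional ℝ (LinearMap.range (T : X →ₗ[ℝ] Y)) := by
  rcases eq_or_ne T 0 with rfl | hT0
  · have h0 : LinearMap.range ((0 : X →L[ℝ] Y) : X →ₗ[ℝ] Y) = ⊥ := by ext y; simp [eq_comm]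
    rw [h0]; infer_instance
  · have hTnorm : 0 < ‖T‖ := norm_pos_iff.mpr hT0
    obtain ⟨x, hx1, hxT⟩ := hT
    have hx0 : x ≠ 0 := by
      intro h; rw [h, norm_zero] at hx1; simp at hx1
    obtain ⟨ε, hε, n, f, φ, hφ, hloc⟩ := hX x hx0
    set g : X →ₗ[ℝ] (Fin n → ℝ) := LinearMap.pi (fun i => (f i : X →ₗ[ℝ] ℝ)) with hg
    have hnx : φ (fun i => f i x) = 1 := by
      rw [← hloc x (by simpa using hε), hx1]
    have key : ∀ w : X, (∀ i, f i w = 0) → ‖w‖ < ε → ‖x + w‖ = 1 := by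
      intro w hfw hw
      have h1 : ‖x - (x + w)‖ < ε := by
        have : x - (x + w) = -w := by abel
        rw [this, norm_neg]; exact hw
      have h2 := hloc (x + w) h1
      have h3 : (fun i => f i (x + w)) = fun i => f i x := by
        funext i; rw [map_add, hfw i, add_zero]
      rw [h2, h3, hnx]
    have hker : LinearMap.ker g ≤ LinearMap.ker (T : X →ₗ[ℝ] Y) := by
      intro z hz
      simp only [LinearMap.mem_ker] at hz ⊢
      have hfz : ∀ i, f i z = 0 := fun i => by
        have := congrFun hz i; simpa [hg] using this
      rcases eq_or_ne z 0 with rfl | hz0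
      · simp
      · have hznorm : 0 < ‖z‖ := norm_pos_iff.mpr hz0
        set t : ℝ := ε / (2 * ‖z‖) with ht
        have htpos : 0 < t := by positivity
        have htz : ‖t • z‖ < ε := by
          rw [norm_smul, Real.norm_eq_abs, abs_of_pos htpos, ht,
            div_mul_eq_mul_div, mul_comm, div_lt_iff₀ (by positivity)]
          nlinarith
        have hp : ‖x + t • z‖ = 1 := key (t • z) (fun i => by simp [hfz i]) htz
        have hm : ‖x + (-(t • z))‖ = 1 := by
          refine key (-(t • z)) (fun i => by simp [hfz i]) (by rwa [norm_neg])
        set a : Y := T (x + t • z) with ha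
        set b : Y := T (x + (-(t • z))) with hb
        have hna : ‖a‖ ≤ ‖T‖ := by
          calc ‖a‖ ≤ ‖T‖ * ‖x + t • z‖ := T.le_opNorm _
          _ = ‖T‖ := by rw [hp, mul_one]
        have hnb : ‖b‖ ≤ ‖T‖ := by
          calc ‖b‖ ≤ ‖T‖ * ‖x + (-(t • z))‖ := T.le_opNorm _
          _ = ‖T‖ := by rw [hm, mul_one]
        have hab : a + b = (2 : ℝ) • T x := by
          rw [ha, hb, ← map_add]
          have : (x + t • z) + (x + (-(t • z))) = (2 : ℝ) • x := by
            rw [two_smul]; abel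
          rw [this, map_smul]
        have habn : ‖a + b‖ = 2 * ‖T‖ := by
          rw [hab, norm_smul, Real.norm_ofNat, hxT]
        have h4 : (2:ℝ) * ‖T‖ ≤ ‖a‖ + ‖b‖ := by rw [← habn]; exact norm_add_le a b
        have hea : ‖a‖ = ‖T‖ := le_antisymm hna (by linarith)
        have heb : ‖b‖ = ‖T‖ := le_antisymm hnb (by linarith)
        have heq : a = b := eq_of_norm_eq_of_norm_add_eq (by rw [hea, heb])
          (by rw [habn, hea, heb]; ring)
        have : T (t • z) = 0 := by
          have h5 : a - b = T (t • z) - T (-(t • z)) := by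
            rw [ha, hb, map_add, map_add]; abel
          have h6 : a - b = 0 := by rw [heq]; abel
          rw [h5, map_neg, sub_neg_eq_add, ← two_smul ℝ] at h6
          have := smul_eq_zero.mp h6
          rcases this with h | h
          · norm_num at h
          · exact h
        rw [map_smul] at this
        rcases smul_eq_zero.mp this with h | h
        · exact absurd h (ne_of_gt htpos)
        · exact h
    have hfd : FiniteDimensional ℝ (X ⧸ LinearMap.ker g) :=
      Module.Finite.equiv g.quotKerEquivRange.symm
    have hrange : LinearMap.range (T : X →ₗ[ℝ] Y)
        = LinearMap.range ((LinearMap.ker g).liftQ (T : X →ₗ[ℝ] Y) hker) := by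
      rw [Submodule.range_liftQ]
    rw [hrange]
    infer_instance
end

section
/- Let X be an infinite-dimensional real Banach space whose norm locally depends upon finitely many coordinates. Then X fails Lindenstrauss property A; that is, there exist a real Banach space Y and a bounded linear operator T : X → Y such that T does not belong to the closure (in operator norm) of the set of norm attaining bounded linear operators from X to Y. -/
noncomputable section
set_option synthInstance.maxHeartbeats 400000
set_option maxHeartbeats 1000000

abbrev BCF := BoundedContinuousFunction ℕ ℝ
abbrev L2 := lp (fun _ : ℕ => ℝ) 2
abbrev E1 := WithLp 1 (BCF × L2)

def wgt : ℕ → ℝ := fun k => (2:ℝ)⁻¹ ^ k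

lemma wgt_pos (k : ℕ) : 0 < wgt k := pow_pos (by norm_num) k

def evalL2 (k : ℕ) : L2 →L[ℝ] ℝ :=
  LinearMap.mkContinuous
    { toFun := fun f => f k
      map_add' := fun f g => rfl
      map_smul' := fun c f => rfl }
    1 (fun f => by rw [one_mul]; exact lp.norm_apply_le_norm (by norm_num) f k)

def coordE (k : ℕ) : E1 →L[ℝ] ℝ × ℝ :=
  ((BoundedContinuousFunction.evalCLM ℝ k).prodMap (evalL2 k)).comp
    (WithLp.prodContinuousLinearEquiv 1 ℝ BCF L2).toContinuousLinearMap

lemma coordE_apply (k : ℕ) (z : E1) : coordE k z = (z.fst k, z.snd k) := rfl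

def Ygraph : Submodule ℝ E1 where
  carrier := {z | ∀ k, z.snd k = wgt k * z.fst k}
  add_mem' := by
    intro a b ha hb k
    have h2 : (a + b).snd k = a.snd k + b.snd k := rfl
    have h1 : (a + b).fst k = a.fst k + b.fst k := rfl
    rw [h2, ha k, hb k, h1]; ring
  zero_mem' := by
    intro k
    have h2 : (0 : E1).snd k = 0 := rfl
    have h1 : (0 : E1).fst k = 0 := rfl
    rw [h1, h2]; ring
  smul_mem' := by
    intro c a ha k
    have h2 : (c • a).snd k = c * a.snd k := rfl
    have h1 : (c • a).fst k = c * a.fst k := rfl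
    rw [h2, ha k, h1]; ring

lemma isClosed_Ygraph : IsClosed (Ygraph : Set E1) := by
  have : (Ygraph : Set E1) = ⋂ k, {z : E1 | (coordE k z).2 - wgt k * (coordE k z).1 = 0} := by
    ext z
    simp only [Set.mem_iInter, Set.mem_setOf_eq, SetLike.mem_coe, coordE_apply]
    constructor
    · intro h k; rw [h k]; ring
    · intro h k; have := h k; linarith
  rw [this]
  refine isClosed_iInter fun k => isClosed_eq ?_ continuous_const
  exact (continuous_snd.comp (coordE k).continuous).sub
    (continuous_const.mul (continuous_fst.comp (coordE k).continuous))

abbrev Yt := ↥Ygraph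

instance : CompleteSpace Yt := isClosed_Ygraph.completeSpace_coe

instance instNACGBCF : NormedAddCommGroup BCF := inferInstance

instance instNSBCF : NormedSpace ℝ BCF := inferInstance

example : NormedAddCommGroup Yt := by infer_instance
example : NormedSpace ℝ Yt := by infer_instance

-- norm decomposition on E1
lemma E1_norm (z : E1) : ‖z‖ = ‖z.fst‖ + ‖z.snd‖ := by
  rw [WithLp.prod_norm_eq_add (by norm_num)]
  norm_num

end

section SC
open scoped BoundedContinuousFunction

lemma Yt_strict (a b : Yt) (r : ℝ) (hr : 0 < r) (ha : ‖a‖ ≤ r) (hb : ‖b‖ ≤ r)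
    (hab : ‖a + b‖ = 2 * r) : a = b := by
  have htri : ‖a + b‖ ≤ ‖a‖ + ‖b‖ := norm_add_le a b
  have hna : ‖a‖ = r := by linarith
  have hnb : ‖b‖ = r := by linarith
  set A := (a : E1) with hA
  set B := (b : E1) with hB
  have hcoe : ((a + b : Yt) : E1) = A + B := rfl
  have hnA : ‖A‖ = r := hna
  have hnB : ‖B‖ = r := hnb
  have hnAB : ‖A + B‖ = ‖A‖ + ‖B‖ := by
    rw [← hcoe]
    show ‖(a+b : Yt)‖ = _
    rw [hab, hnA, hnB]; ring
  -- component equality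
  have hfst : (A + B).fst = A.fst + B.fst := rfl
  have hsnd : (A + B).snd = A.snd + B.snd := rfl
  have e1 : ‖A.snd + B.snd‖ = ‖A.snd‖ + ‖B.snd‖ := by
    have d1 := E1_norm A
    have d2 := E1_norm B
    have d3 := E1_norm (A + B)
    rw [hfst, hsnd] at d3
    have t1 : ‖A.fst + B.fst‖ ≤ ‖A.fst‖ + ‖B.fst‖ := norm_add_le _ _
    have t2 : ‖A.snd + B.snd‖ ≤ ‖A.snd‖ + ‖B.snd‖ := norm_add_le _ _
    rw [d1, d2, d3] at hnAB
    linarith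
  have hray : SameRay ℝ A.snd B.snd := sameRay_iff_norm_add.mpr e1
  have hga : ∀ k, A.snd k = wgt k * A.fst k := a.2
  have hgb : ∀ k, B.snd k = wgt k * B.fst k := b.2
  -- auxiliary: if snd = 0 then the element is 0
  have hzero : ∀ c : Yt, (c : E1).snd = 0 → c = 0 := by
    intro c hc
    have h1 : (c : E1).fst = 0 := by
      ext k
      have := c.2 k
      rw [hc] at this
      have h0 : (0 : L2) k = 0 := rfl
      rw [h0] at this
      have hw := (wgt_pos k).ne'
      have h2 : wgt k * (↑c : E1).fst k = 0 := this.symm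
      have := (mul_eq_zero.mp h2).resolve_left hw
      simpa using this
    have : (c : E1) = 0 := (WithLp.ext_iff _).2 (Prod.ext h1 hc)
    exact Subtype.ext this
  rcases hray with h0 | h0 | ⟨r₁, r₂, hr₁, hr₂, hrr⟩
  · exfalso; have := hzero a h0; rw [this] at hna; simp at hna; linarith
  · exfalso; have := hzero b h0; rw [this] at hnb; simp at hnb; linarith
  · -- r₁ • A = r₂ • B
    have hAB : r₁ • A = r₂ • B := by
      have hsnd' : r₁ • A.snd = r₂ • B.snd := hrr
      have hfst' : r₁ • A.fst = r₂ • B.fst := by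
        ext k
        have hk : (r₁ • A.snd) k = (r₂ • B.snd) k := by rw [hsnd']
        have c1 : (r₁ • A.snd) k = r₁ * A.snd k := rfl
        have c2 : (r₂ • B.snd) k = r₂ * B.snd k := rfl
        rw [c1, c2, hga k, hgb k] at hk
        have hw := (wgt_pos k).ne'
        have hk' : wgt k * (r₁ * A.fst k) = wgt k * (r₂ * B.fst k) := by ring_nf; ring_nf at hk; linarith
        have : r₁ * A.fst k = r₂ * B.fst k := mul_left_cancel₀ hw hk'
        simpa using this
      exact (WithLp.ext_iff _).2 (Prod.ext hfst' hsnd')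
    have hn : r₁ * r = r₂ * r := by
      have := congrArg norm hAB
      rw [norm_smul, norm_smul, hnA, hnB] at this
      rw [Real.norm_eq_abs, Real.norm_eq_abs, abs_of_pos hr₁, abs_of_pos hr₂] at this
      exact this
    have hre : r₁ = r₂ := mul_right_cancel₀ hr.ne' hn
    rw [hre] at hAB
    have : A = B := by
      have := congrArg (fun z => r₂⁻¹ • z) hAB
      simpa [smul_smul, inv_mul_cancel₀ hr₂.ne'] using this
    exact Subtype.ext this

end SC

section Ops
open scoped ENNReal
variable {X : Type*} [NormedAddCommGroup X] [NormedSpace ℝ X]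

lemma fk_bound (f : ℕ → X →L[ℝ] ℝ) (h1 : ∀ k, ‖f k‖ ≤ 1) (x : X) (k : ℕ) :
    ‖f k x‖ ≤ ‖x‖ := by
  calc ‖f k x‖ ≤ ‖f k‖ * ‖x‖ := (f k).le_opNorm x
  _ ≤ 1 * ‖x‖ := by gcongr; exact h1 k
  _ = ‖x‖ := one_mul _

noncomputable def Amap (f : ℕ → X →L[ℝ] ℝ) (h1 : ∀ k, ‖f k‖ ≤ 1) : X →L[ℝ] BCF :=
  LinearMap.mkContinuous
    { toFun := fun x => BoundedContinuousFunction.ofNormedAddCommGroup (fun k => f k x)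
        continuous_of_discreteTopology ‖x‖ (fk_bound f h1 x)
      map_add' := fun x y => by ext k; simp
      map_smul' := fun c x => by ext k; simp }
    1 (fun x => by
      rw [one_mul]
      exact BoundedContinuousFunction.norm_ofNormedAddCommGroup_le _ (norm_nonneg x)
        (fk_bound f h1 x))

lemma Amap_apply (f : ℕ → X →L[ℝ] ℝ) (h1 : ∀ k, ‖f k‖ ≤ 1) (x : X) (k : ℕ) :
    Amap f h1 x k = f k x := rfl

lemma wgt_sq (k : ℕ) : wgt k ^ 2 = (4:ℝ)⁻¹ ^ k := by
  rw [wgt, ← pow_mul, mul_comm, pow_mul]; norm_num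

lemma summable_wgt_sq (c : ℝ) : Summable fun k => (wgt k * c) ^ 2 := by
  have : (fun k => (wgt k * c) ^ 2) = fun k => ((4:ℝ)⁻¹) ^ k * c ^ 2 := by
    funext k; rw [mul_pow, wgt_sq]
  rw [this]
  exact (summable_geometric_of_lt_one (by norm_num) (by norm_num)).mul_right _

lemma rpow2 (a : ℝ) : ‖a‖ ^ ((2:ℝ≥0∞).toReal) = a ^ 2 := by
  have h : (2:ℝ≥0∞).toReal = ((2:ℕ):ℝ) := by simp
  rw [h, Real.rpow_natCast, Real.norm_eq_abs]
  exact sq_abs a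

lemma sq_term_le (f : ℕ → X →L[ℝ] ℝ) (h1 : ∀ k, ‖f k‖ ≤ 1) (x : X) (k : ℕ) :
    ‖wgt k * f k x‖ ^ ((2:ℝ≥0∞).toReal) ≤ (wgt k * ‖x‖) ^ 2 := by
  rw [rpow2]
  have h5 : (f k x) ^ 2 ≤ ‖x‖ ^ 2 := by
    have h6 := fk_bound f h1 x k
    rw [Real.norm_eq_abs] at h6
    nlinarith [abs_nonneg (f k x), sq_abs (f k x)]
  nlinarith [sq_nonneg (wgt k)]

lemma memℓp_B (f : ℕ → X →L[ℝ] ℝ) (h1 : ∀ k, ‖f k‖ ≤ 1) (x : X) :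
    Memℓp (fun k => wgt k * f k x) 2 := by
  apply memℓp_gen
  apply Summable.of_nonneg_of_le (fun k => Real.rpow_nonneg (norm_nonneg _) _)
    (fun k => sq_term_le f h1 x k) (summable_wgt_sq ‖x‖)

lemma tsum_wgt_sq_le (x : X) (f : ℕ → X →L[ℝ] ℝ) (h1 : ∀ k, ‖f k‖ ≤ 1) :
    ∑' k, ‖wgt k * f k x‖ ^ ((2:ℝ≥0∞).toReal) ≤ (2 * ‖x‖) ^ 2 := by
  have hs : Summable fun k => ‖wgt k * f k x‖ ^ ((2:ℝ≥0∞).toReal) :=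
    Summable.of_nonneg_of_le (fun k => Real.rpow_nonneg (norm_nonneg _) _)
      (fun k => sq_term_le f h1 x k) (summable_wgt_sq ‖x‖)
  calc (∑' k, ‖wgt k * f k x‖ ^ ((2:ℝ≥0∞).toReal))
      ≤ ∑' k, (wgt k * ‖x‖) ^ 2 := Summable.tsum_le_tsum (fun k => sq_term_le f h1 x k) hs (summable_wgt_sq ‖x‖)
    _ = ∑' k, (4:ℝ)⁻¹ ^ k * ‖x‖ ^ 2 := by congr 1; funext k; rw [mul_pow, wgt_sq]
    _ = (∑' k, (4:ℝ)⁻¹ ^ k) * ‖x‖ ^ 2 := tsum_mul_right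
    _ = (1 - 4⁻¹)⁻¹ * ‖x‖ ^ 2 := by rw [tsum_geometric_of_lt_one (by norm_num) (by norm_num)]
    _ ≤ (2 * ‖x‖) ^ 2 := by rw [mul_pow]; nlinarith [sq_nonneg ‖x‖]

noncomputable def Bmap (f : ℕ → X →L[ℝ] ℝ) (h1 : ∀ k, ‖f k‖ ≤ 1) : X →L[ℝ] L2 :=
  LinearMap.mkContinuous
    { toFun := fun x => ⟨fun k => wgt k * f k x, memℓp_B f h1 x⟩
      map_add' := fun x y => by
        apply lp.ext; funext k
        show wgt k * f k (x + y) = wgt k * f k x + wgt k * f k y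
        rw [map_add]; ring
      map_smul' := fun c x => by
        apply lp.ext; funext k
        show wgt k * f k (c • x) = c * (wgt k * f k x)
        rw [map_smul]; show wgt k * (c * f k x) = _; ring }
    2 (fun x => by
      apply lp.norm_le_of_tsum_le (by norm_num) (by positivity)
      have hrhs : ((2:ℝ) * ‖x‖) ^ ((2:ℝ≥0∞).toReal) = (2 * ‖x‖) ^ 2 := by
        have h : (2:ℝ≥0∞).toReal = ((2:ℕ):ℝ) := by simp
        rw [h, Real.rpow_natCast]
      rw [hrhs]
      exact tsum_wgt_sq_le x f h1)

lemma Bmap_apply (f : ℕ → X →L[ℝ] ℝ) (h1 : ∀ k, ‖f k‖ ≤ 1) (x : X) (k : ℕ) :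
    Bmap f h1 x k = wgt k * f k x := rfl

end Ops

section T
open scoped ENNReal
variable {X : Type*} [NormedAddCommGroup X] [NormedSpace ℝ X]

noncomputable def Tmap (f : ℕ → X →L[ℝ] ℝ) (h1 : ∀ k, ‖f k‖ ≤ 1) : X →L[ℝ] Yt :=
  ContinuousLinearMap.codRestrict
    (((WithLp.prodContinuousLinearEquiv 1 ℝ BCF L2).symm.toContinuousLinearMap).comp
      ((Amap f h1).prod (Bmap f h1)))
    Ygraph (fun x k => rfl)

lemma Tmap_fst (f : ℕ → X →L[ℝ] ℝ) (h1 : ∀ k, ‖f k‖ ≤ 1) (x : X) (k : ℕ) :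
    ((Tmap f h1 x : E1)).fst k = f k x := rfl

lemma Tmap_ge (f : ℕ → X →L[ℝ] ℝ) (h1 : ∀ k, ‖f k‖ ≤ 1) (x : X) (k : ℕ) :
    |f k x| ≤ ‖Tmap f h1 x‖ := by
  have h0 : ‖Tmap f h1 x‖ = ‖(Tmap f h1 x : E1)‖ := rfl
  rw [h0, E1_norm]
  have h2 : |f k x| ≤ ‖(Tmap f h1 x : E1).fst‖ := by
    have := BoundedContinuousFunction.norm_coe_le_norm (Tmap f h1 x : E1).fst k
    rw [show ((Tmap f h1 x : E1).fst) k = f k x from rfl] at this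
    simpa using this
  have h3 : 0 ≤ ‖(Tmap f h1 x : E1).snd‖ := norm_nonneg _
  linarith

end T

section Funcs
variable (X : Type*) [NormedAddCommGroup X] [NormedSpace ℝ X]

lemma exists_funcs (hinf : ¬ FiniteDimensional ℝ X) :
    ∃ f : ℕ → X →L[ℝ] ℝ, (∀ k, ‖f k‖ ≤ 1) ∧
      ∀ (n : ℕ) (g : Fin n → X →L[ℝ] ℝ), ∃ z : X, ‖z‖ = 1 ∧ (∀ i, g i z = 0) ∧
        ∃ k, (1:ℝ)/2 ≤ |f k z| := by
  classical
  -- a linearly independent sequence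
  set b := Module.Basis.ofVectorSpace ℝ X with hb
  haveI : Infinite (Module.Basis.ofVectorSpaceIndex ℝ X) := by
    rw [← not_finite_iff_infinite]
    intro hfin
    haveI := Fintype.ofFinite (Module.Basis.ofVectorSpaceIndex ℝ X)
    exact hinf (Module.Finite.of_basis b)
  set e := Infinite.natEmbedding (Module.Basis.ofVectorSpaceIndex ℝ X) with he
  set v : ℕ → X := fun n => b (e n) with hv
  have hvli : LinearIndependent ℝ v := b.linearIndependent.comp e e.injective
  -- the finite dimensional subspaces
  set En : ℕ → Submodule ℝ X := fun n =>
    Submodule.span ℝ (Set.range (fun i : Fin (n+1) => v i)) with hEn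
  haveI hfd : ∀ n, FiniteDimensional ℝ (En n) := fun n =>
    FiniteDimensional.span_of_finite ℝ (Set.finite_range _)
  have hrank : ∀ n, n + 1 ≤ Module.finrank ℝ (En n) := by
    intro n
    have hli : LinearIndependent ℝ (fun i : Fin (n+1) => v i) :=
      hvli.comp (fun i : Fin (n+1) => (i : ℕ)) Fin.val_injective
    rw [hEn]
    rw [finrank_span_eq_card hli]
    simp
  -- countable dense subsets of each En
  haveI : ∀ n, TopologicalSpace.SeparableSpace (En n) := fun n => by infer_instance
  have hD : ∀ n : ℕ, ∃ s : Set (En n), s.Countable ∧ Dense s :=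
    fun n => TopologicalSpace.exists_countable_dense (En n)
  choose Ds hDc hDd using hD
  set D : Set X := {0} ∪ ⋃ n, ((↑) '' (Ds n)) with hDdef
  have hDcount : D.Countable := by
    apply Set.Countable.union (Set.countable_singleton 0)
    exact Set.countable_iUnion (fun n => (hDc n).image _)
  have hDne : D.Nonempty := ⟨0, Or.inl rfl⟩
  obtain ⟨c, hc⟩ := hDcount.exists_eq_range hDne
  -- the functionals
  set f : ℕ → X →L[ℝ] ℝ := fun k =>
    if h : c k ≠ 0 then (exists_dual_vector ℝ (c k) (norm_ne_zero_iff.mpr h)).choose else 0 with hf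
  have hf1 : ∀ k, ‖f k‖ ≤ 1 := by
    intro k
    rw [hf]
    by_cases h : c k ≠ 0
    · simp only [dif_pos h]
      exact le_of_eq (exists_dual_vector ℝ (c k) (norm_ne_zero_iff.mpr h)).choose_spec.1
    · simp [dif_neg h]
  refine ⟨f, hf1, ?_⟩
  intro n g
  -- find a unit vector in En n killed by all g i
  set G : En n →ₗ[ℝ] (Fin n → ℝ) :=
    { toFun := fun z => fun i => g i z
      map_add' := fun a b => by funext i; simp
      map_smul' := fun r a => by funext i; simp } with hG
  have hker : LinearMap.ker G ≠ ⊥ := by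
    intro hbot
    have hinj : Function.Injective G := by
      rw [← LinearMap.ker_eq_bot]; exact hbot
    have := LinearMap.finrank_le_finrank_of_injective hinj
    rw [Module.finrank_pi, Fintype.card_fin] at this
    have := hrank n
    omega
  obtain ⟨z₀, hz₀mem, hz₀ne⟩ := (Submodule.ne_bot_iff _).mp hker
  have hz₀ker : ∀ i, g i (z₀ : X) = 0 := by
    intro i
    have : G z₀ = 0 := hz₀mem
    have := congrFun this i
    simpa [hG] using this
  have hz₀X : (z₀ : X) ≠ 0 := by
    intro h
    exact hz₀ne (Subtype.ext h)
  set zz : En n := ‖(z₀ : X)‖⁻¹ • z₀ with hzz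
  have hzznorm : ‖(zz : X)‖ = 1 := by
    rw [hzz]
    have : ((‖(z₀ : X)‖⁻¹ • z₀ : En n) : X) = ‖(z₀ : X)‖⁻¹ • (z₀ : X) := rfl
    rw [this, norm_smul, norm_inv, norm_norm]
    exact inv_mul_cancel₀ (norm_ne_zero_iff.mpr hz₀X)
  have hzzker : ∀ i, g i (zz : X) = 0 := by
    intro i
    have : ((zz : En n) : X) = ‖(z₀ : X)‖⁻¹ • (z₀ : X) := rfl
    rw [this, map_smul, hz₀ker i, smul_zero]
  -- approximate zz by an element of Ds n
  have hdense := (hDd n).exists_dist_lt zz (show (0:ℝ) < 1/4 by norm_num)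
  obtain ⟨y, hymem, hydist⟩ := hdense
  have hydistX : ‖(zz : X) - (y : X)‖ < 1/4 := by
    have : dist zz y = ‖(zz : X) - (y : X)‖ := by
      rw [Subtype.dist_eq, dist_eq_norm]
    rwa [this] at hydist
  have hynorm : (3:ℝ)/4 ≤ ‖(y : X)‖ := by
    have := norm_sub_norm_le (zz : X) (y : X)
    rw [hzznorm] at this
    linarith [le_of_lt hydistX]
  have hyne : (y : X) ≠ 0 := by
    intro h; rw [h] at hynorm; simp at hynorm; linarith
  have hyD : (y : X) ∈ D := Or.inr (Set.mem_iUnion.mpr ⟨n, ⟨y, hymem, rfl⟩⟩)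
  rw [hc] at hyD
  obtain ⟨k, hk⟩ := hyD
  refine ⟨(zz : X), hzznorm, hzzker, k, ?_⟩
  have hck : c k ≠ 0 := by rw [hk]; exact hyne
  have hspec := (exists_dual_vector ℝ (c k) (norm_ne_zero_iff.mpr hck)).choose_spec
  have hfk : f k = (exists_dual_vector ℝ (c k) (norm_ne_zero_iff.mpr hck)).choose := by
    rw [hf]; simp [dif_pos hck]
  have hval : f k (c k) = ‖c k‖ := by rw [hfk]; exact hspec.2
  have hnorm1 : ‖f k‖ = 1 := by rw [hfk]; exact hspec.1
  have hdiff : |f k ((zz : X) - (y : X))| ≤ 1/4 := by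
    calc |f k ((zz : X) - (y : X))| ≤ ‖f k‖ * ‖(zz : X) - (y : X)‖ := (f k).le_opNorm _
    _ ≤ 1 * (1/4) := by
        apply mul_le_mul (le_of_eq hnorm1) (le_of_lt hydistX) (norm_nonneg _) zero_le_one
    _ = 1/4 := one_mul _
  have hy4 : f k (y : X) = ‖(y : X)‖ := by rw [← hk]; exact hval
  have hsplit : f k (zz : X) = f k (y : X) + f k ((zz : X) - (y : X)) := by
    rw [← map_add]; congr 1; abel
  rw [hsplit, hy4]
  rw [abs_le] at hdiff
  have : (1:ℝ)/2 ≤ ‖(y : X)‖ + f k ((zz : X) - (y : X)) := by linarith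
  exact this.trans (le_abs_self _)

end Funcs

set_option synthInstance.maxHeartbeats 1000000 in
set_option maxHeartbeats 2000000 in
/-- An infinite-dimensional real Banach space whose norm locally depends upon finitely many
coordinates fails Lindenstrauss property A: there are a real Banach space `Y` and a bounded
linear operator `T : X → Y` which is not in the operator-norm closure of the norm attaining
operators from `X` to `Y`. -/
theorem stmt_11 (X : Type*) [NormedAddCommGroup X] [NormedSpace ℝ X] [CompleteSpace X]
    (hinf : ¬ FiniteDimensional ℝ X)
    (hX : NormLocallyDependsOnFinitelyManyCoordinates X) :
    ∃ (Y : Type) (_ : NormedAddCommGroup Y) (_ : NormedSpace ℝ Y) (_ : CompleteSpace Y)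
      (T : X →L[ℝ] Y),
      T ∉ closure {S : X →L[ℝ] Y | NormAttaining S} := by
  obtain ⟨f, hf1, hkey⟩ := exists_funcs X hinf
  refine ⟨Yt, inferInstance, inferInstance, inferInstance, Tmap f hf1, ?_⟩
  intro hmem
  replace hmem := (Metric.mem_closure_iff (α := X →L[ℝ] Yt)).mp hmem
  obtain ⟨S, hS, hdist⟩ := hmem (1/4) (by norm_num)
  obtain ⟨x, hx1, hxattain⟩ := hS
  -- T has norm at least 1/2
  obtain ⟨z₀, hz₀, -, k₀, hk₀⟩ := hkey 0 (fun _ => 0)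
  have hT : (1:ℝ)/2 ≤ ‖Tmap f hf1‖ := by
    have h1 := Tmap_ge f hf1 z₀ k₀
    have h2 : ‖Tmap f hf1 z₀‖ ≤ ‖Tmap f hf1‖ := by
      have := (Tmap f hf1).le_opNorm z₀
      rw [hz₀, mul_one] at this
      exact this
    linarith
  have hdist' : ‖Tmap f hf1 - S‖ < 1/4 := by
    exact lt_of_eq_of_lt (dist_eq_norm (Tmap f hf1) S).symm hdist
  have hSnorm : (1:ℝ)/4 ≤ ‖S‖ := by
    have := norm_sub_norm_le (Tmap f hf1) S
    linarith
  -- flatness at x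
  have hxne : x ≠ 0 := by
    intro h; rw [h, norm_zero] at hx1; norm_num at hx1
  obtain ⟨ε, hε, n, g, φ, hφc, hφ⟩ := hX x hxne
  obtain ⟨z, hz1, hzker, k, hk⟩ := hkey n g
  set u := (ε/2) • z with hu
  have hflat : ∀ w : X, (∀ i, g i w = 0) → ‖w‖ < ε → ‖x + w‖ = 1 := by
    intro w hwker hwn
    have h1 : ‖x - (x + w)‖ < ε := by
      have : x - (x + w) = -w := by abel
      rw [this, norm_neg]; exact hwn
    have h2 := hφ (x + w) h1
    have h3 := hφ x (by rw [sub_self, norm_zero]; exact hε)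
    have h4 : (fun i => g i (x + w)) = fun i => g i x := by
      funext i; rw [map_add, hwker i, add_zero]
    rw [h2, h4, ← h3, hx1]
  have hu_ker : ∀ i, g i u = 0 := fun i => by rw [hu, map_smul, hzker i, smul_zero]
  have hmu_ker : ∀ i, g i (-u) = 0 := fun i => by rw [map_neg, hu_ker i, neg_zero]
  have hu_norm : ‖u‖ < ε := by
    rw [hu, norm_smul, hz1, mul_one, Real.norm_eq_abs, abs_of_pos (by linarith)]
    linarith
  have hp : ‖x + u‖ = 1 := hflat u hu_ker hu_norm
  have hm : ‖x - u‖ = 1 := by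
    have := hflat (-u) hmu_ker (by rw [norm_neg]; exact hu_norm)
    rw [← sub_eq_add_neg] at this
    exact this
  -- strict convexity
  have han : ‖S (x + u)‖ ≤ ‖S‖ := by
    have := S.le_opNorm (x + u); rw [hp, mul_one] at this; exact this
  have hbn : ‖S (x - u)‖ ≤ ‖S‖ := by
    have := S.le_opNorm (x - u); rw [hm, mul_one] at this; exact this
  have hsum : S (x + u) + S (x - u) = S x + S x := by
    rw [← map_add, ← map_add]; congr 1; abel
  have habn : ‖S (x + u) + S (x - u)‖ = 2 * ‖S‖ := by
    rw [hsum, ← two_smul ℝ (S x), norm_smul, hxattain]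
    norm_num
  have heq := Yt_strict (S (x + u)) (S (x - u)) ‖S‖
    (lt_of_lt_of_le (by norm_num) hSnorm) han hbn habn
  have hSu : S u = 0 := by
    have h5 : S (x + u) - S (x - u) = S u + S u := by
      rw [← map_sub]
      have : (x + u) - (x - u) = u + u := by abel
      rw [this, map_add]
    rw [heq, sub_self] at h5
    have h6 : (2:ℝ) • S u = 0 := by rw [two_smul]; exact h5.symm
    have := smul_eq_zero.mp h6
    rcases this with h | h
    · norm_num at h
    · exact h
  have hSz : S z = 0 := by
    rw [hu, map_smul] at hSu
    rcases smul_eq_zero.mp hSu with h | h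
    · exfalso; have : ε/2 ≠ 0 := by linarith
      exact this h
    · exact h
  -- contradiction
  have h8 : (1:ℝ)/2 ≤ ‖Tmap f hf1 z‖ := le_trans hk (Tmap_ge f hf1 z k)
  have h10 : (Tmap f hf1 - S) z = Tmap f hf1 z := by
    rw [ContinuousLinearMap.sub_apply, hSz, sub_zero]
  have h9 : ‖Tmap f hf1 z‖ ≤ ‖Tmap f hf1 - S‖ := by
    rw [← h10]
    have := (Tmap f hf1 - S).le_opNorm z
    rw [hz1, mul_one] at this
    exact this
  linarith
end

section
/- Let X be an infinite-dimensional closed subspace of c₀. Then X fails Lindenstrauss property A; that is, there exist a real Banach space Y and a bounded linear operator T : X → Y such that T does not belong to the closure (in operator norm) of the set of norm attaining bounded linear operators from X to Y. -/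
open scoped ZeroAtInfty
open ZeroAtInftyContinuousMap
open scoped NNReal ENNReal

noncomputable section

namespace Stmt12Aux

/-- pointwise bound in C₀ -/
lemma c0_apply_le (f : C₀(ℕ, ℝ)) (n : ℕ) : ‖f n‖ ≤ ‖f‖ := by
  rw [← norm_toBCF_eq_norm]
  exact BoundedContinuousFunction.norm_coe_le_norm f.toBCF n

lemma c0_norm_le (f : C₀(ℕ, ℝ)) {C : ℝ} (hC : 0 ≤ C) (h : ∀ n, ‖f n‖ ≤ C) : ‖f‖ ≤ C := by
  rw [← norm_toBCF_eq_norm]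
  exact (BoundedContinuousFunction.norm_le hC).mpr h

lemma memℓp_aux (f : C₀(ℕ, ℝ)) : Memℓp (fun n => f n * (1/2) ^ n) 2 := by
  apply memℓp_gen
  have h2 : (2 : ℝ≥0∞).toReal = 2 := by simp
  rw [h2]
  have : ∀ n : ℕ, ‖f n * (1/2 : ℝ) ^ n‖ ^ (2:ℝ) ≤ ‖f‖ ^ 2 * (1/4 : ℝ) ^ n := by
    intro n
    have h1 : ‖f n * (1/2 : ℝ) ^ n‖ ^ (2:ℝ) = ‖f n * (1/2 : ℝ) ^ n‖ ^ (2:ℕ) := by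
      rw [← Real.rpow_natCast]; norm_num
    rw [h1]
    have := c0_apply_le f n
    have hnn : (0:ℝ) ≤ ‖f n * (1/2 : ℝ) ^ n‖ := norm_nonneg _
    have : ‖f n * (1/2 : ℝ) ^ n‖ ≤ ‖f‖ * (1/2)^n := by
      rw [norm_mul, norm_pow]
      have : ‖(1/2 : ℝ)‖ = 1/2 := by norm_num
      rw [this]
      exact mul_le_mul_of_nonneg_right (c0_apply_le f n) (by positivity)
    calc ‖f n * (1/2 : ℝ) ^ n‖ ^ (2:ℕ) ≤ (‖f‖ * (1/2)^n) ^ (2:ℕ) := by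
          exact pow_le_pow_left₀ hnn this 2
      _ = ‖f‖ ^ 2 * (1/4 : ℝ) ^ n := by
          rw [mul_pow, ← pow_mul, mul_comm n 2, pow_mul]; norm_num
  apply Summable.of_nonneg_of_le (fun n => by positivity) this
  exact (summable_geometric_of_lt_one (by norm_num) (by norm_num)).mul_left _

/-- the weighted embedding into ℓ² -/
def Lmap : C₀(ℕ, ℝ) →ₗ[ℝ] lp (fun _ : ℕ => ℝ) 2 where
  toFun f := ⟨fun n => f n * (1/2) ^ n, memℓp_aux f⟩
  map_add' f g := by
    apply lp.ext
    funext n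
    show (f + g) n * (1/2:ℝ)^n = f n * (1/2)^n + g n * (1/2)^n
    rw [ZeroAtInftyContinuousMap.add_apply]; ring
  map_smul' c f := by
    apply lp.ext
    funext n
    show (c • f) n * (1/2:ℝ)^n = c * (f n * (1/2)^n)
    rw [ZeroAtInftyContinuousMap.smul_apply]; simp [smul_eq_mul]; ring

lemma Lmap_inj : Function.Injective Lmap := by
  intro f g h
  ext n
  have := congrArg (fun v : lp (fun _ : ℕ => ℝ) 2 => (v : ∀ _ : ℕ, ℝ) n) h
  simp only [Lmap, LinearMap.coe_mk, AddHom.coe_mk] at this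
  have hpow : ((1:ℝ)/2) ^ n ≠ 0 := by positivity
  exact mul_right_cancel₀ hpow this

lemma bound_aux (f : C₀(ℕ, ℝ)) (n : ℕ) :
    ‖f n * (1/2:ℝ)^n‖ ^ (2:ℕ) ≤ ‖f‖^2 * (1/4:ℝ)^n := by
  have hnn : (0:ℝ) ≤ ‖f n * (1/2 : ℝ) ^ n‖ := norm_nonneg _
  have hle : ‖f n * (1/2 : ℝ) ^ n‖ ≤ ‖f‖ * (1/2)^n := by
    rw [norm_mul, norm_pow]
    have : ‖(1/2 : ℝ)‖ = 1/2 := by norm_num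
    rw [this]
    exact mul_le_mul_of_nonneg_right (c0_apply_le f n) (by positivity)
  calc ‖f n * (1/2 : ℝ) ^ n‖ ^ (2:ℕ) ≤ (‖f‖ * (1/2)^n) ^ (2:ℕ) :=
        pow_le_pow_left₀ hnn hle 2
    _ = ‖f‖ ^ 2 * (1/4 : ℝ) ^ n := by
        rw [mul_pow, ← pow_mul, mul_comm n 2, pow_mul]; norm_num

lemma rpow_two_eq (x : ℝ) : x ^ (2:ℝ≥0∞).toReal = x ^ (2:ℕ) := by
  have h2 : (2 : ℝ≥0∞).toReal = 2 := by simp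
  rw [h2, ← Real.rpow_natCast]; norm_num

lemma norm_Lmap_le (f : C₀(ℕ, ℝ)) : ‖Lmap f‖ ≤ 2 * ‖f‖ := by
  apply lp.norm_le_of_tsum_le (p := 2) (by simp) (by positivity)
  have hcoe : ∀ n : ℕ, ((Lmap f : lp (fun _ : ℕ => ℝ) 2) : ∀ _ : ℕ, ℝ) n
      = f n * (1/2:ℝ)^n := fun n => rfl
  have hfn : (fun n : ℕ => ‖((Lmap f : lp (fun _ : ℕ => ℝ) 2) : ∀ _ : ℕ, ℝ) n‖ ^ (2:ℝ≥0∞).toReal)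
      = fun n : ℕ => ‖f n * (1/2:ℝ)^n‖ ^ (2:ℕ) := by
    funext n; rw [hcoe n, rpow_two_eq]
  rw [hfn, rpow_two_eq]
  have hsum : Summable (fun n : ℕ => ‖f‖^2 * (1/4:ℝ)^n) :=
    (summable_geometric_of_lt_one (by norm_num) (by norm_num)).mul_left _
  have hsum2 : Summable (fun n : ℕ => ‖f n * (1/2:ℝ)^n‖ ^ (2:ℕ)) :=
    Summable.of_nonneg_of_le (fun n => by positivity) (bound_aux f) hsum
  calc ∑' n : ℕ, ‖f n * (1/2:ℝ)^n‖ ^ (2:ℕ)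
      ≤ ∑' n : ℕ, ‖f‖^2 * (1/4:ℝ)^n := Summable.tsum_le_tsum (bound_aux f) hsum2 hsum
    _ = ‖f‖^2 * (1 - 1/4:ℝ)⁻¹ := by
        rw [tsum_mul_left, tsum_geometric_of_lt_one (by norm_num) (by norm_num)]
    _ ≤ (2 * ‖f‖) ^ (2:ℕ) := by nlinarith [sq_nonneg ‖f‖, norm_nonneg f]

/-- Type synonym of `C₀(ℕ, ℝ)` carrying the strictly-convex-like norm
`‖f‖ + ‖Lmap f‖`. -/
def Ysp : Type := C₀(ℕ, ℝ)

/-- the identity, as a map into the synonym -/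
def ofC0 : C₀(ℕ, ℝ) → Ysp := id
/-- the identity, out of the synonym -/
def toC0 : Ysp → C₀(ℕ, ℝ) := id

instance : AddCommGroup Ysp := inferInstanceAs (AddCommGroup C₀(ℕ, ℝ))
instance : Module ℝ Ysp := inferInstanceAs (Module ℝ C₀(ℕ, ℝ))

@[simp] lemma toC0_add (a b : Ysp) : toC0 (a + b) = toC0 a + toC0 b := rfl
@[simp] lemma toC0_smul (c : ℝ) (a : Ysp) : toC0 (c • a) = c • toC0 a := rfl
@[simp] lemma toC0_neg (a : Ysp) : toC0 (-a) = -(toC0 a) := rfl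
@[simp] lemma toC0_zero : toC0 0 = 0 := rfl
lemma toC0_inj : Function.Injective toC0 := fun _ _ h => h
@[simp] lemma toC0_ofC0 (f : C₀(ℕ, ℝ)) : toC0 (ofC0 f) = f := rfl

noncomputable instance : NormedAddCommGroup Ysp :=
  AddGroupNorm.toNormedAddCommGroup
    { toFun := fun a => ‖toC0 a‖ + ‖Lmap (toC0 a)‖
      map_zero' := by simp
      add_le' := fun a b => by
        simp only [toC0_add, map_add]
        have h1 := norm_add_le (toC0 a) (toC0 b)
        have h2 := norm_add_le (Lmap (toC0 a)) (Lmap (toC0 b))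
        linarith
      neg' := fun a => by simp
      eq_zero_of_map_eq_zero' := fun a h => by
        have h0 : ‖toC0 a‖ + ‖Lmap (toC0 a)‖ = 0 := h
        have h1 : ‖toC0 a‖ = 0 := by
          have := norm_nonneg (toC0 a)
          have := norm_nonneg (Lmap (toC0 a))
          linarith
        exact toC0_inj (by simpa using norm_eq_zero.mp h1) }

lemma Ysp_norm_def (a : Ysp) : ‖a‖ = ‖toC0 a‖ + ‖Lmap (toC0 a)‖ := rfl

lemma norm_toC0_le (a : Ysp) : ‖toC0 a‖ ≤ ‖a‖ := by
  rw [Ysp_norm_def]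
  have := norm_nonneg (Lmap (toC0 a))
  linarith

lemma Ysp_norm_le (a : Ysp) : ‖a‖ ≤ 3 * ‖toC0 a‖ := by
  rw [Ysp_norm_def]
  have := norm_Lmap_le (toC0 a)
  linarith

noncomputable instance : NormedSpace ℝ Ysp where
  norm_smul_le c a := by
    rw [Ysp_norm_def, Ysp_norm_def, toC0_smul, map_smul,
      norm_smul c (toC0 a), norm_smul c (Lmap (toC0 a))]
    exact le_of_eq (by ring)

/-- identity as a uniform equivalence between the two norms -/
noncomputable def YspEquiv : C₀(ℕ, ℝ) ≃ᵤ Ysp where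
  toFun := ofC0
  invFun := toC0
  left_inv _ := rfl
  right_inv _ := rfl
  uniformContinuous_toFun := by
    apply LipschitzWith.uniformContinuous (K := 3)
    apply LipschitzWith.of_dist_le_mul
    intro f g
    rw [dist_eq_norm, dist_eq_norm]
    have : ofC0 f - ofC0 g = ofC0 (f - g) := rfl
    rw [this]
    simpa using Ysp_norm_le (ofC0 (f - g))
  uniformContinuous_invFun := by
    apply LipschitzWith.uniformContinuous (K := 1)
    apply LipschitzWith.of_dist_le_mul
    intro a b
    rw [dist_eq_norm, dist_eq_norm]
    have : toC0 a - toC0 b = toC0 (a - b) := rfl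
    rw [this]
    simpa using norm_toC0_le (a - b)

noncomputable instance : CompleteSpace Ysp := YspEquiv.completeSpace_iff.mp inferInstance

lemma Lmap_toC0_inj : Function.Injective (fun a : Ysp => Lmap (toC0 a)) := by
  intro a b h
  exact toC0_inj (Lmap_inj h)

end Stmt12Aux

open Stmt12Aux in
set_option maxHeartbeats 1000000 in
/-- An infinite-dimensional closed subspace `X` of `c₀` (real sequences converging to zero with
the sup norm, realized as `C₀(ℕ, ℝ)`; we encode the subspace by a linear isometric embedding
`J : X → c₀` with closed range) fails Lindenstrauss property A: there are a real Banach space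
`Y` and a bounded linear operator `T : X → Y` which is not in the operator-norm closure of the
norm attaining operators from `X` to `Y`. -/
theorem stmt_12 (X : Type*) [NormedAddCommGroup X] [NormedSpace ℝ X] [CompleteSpace X]
    (J : X →ₗᵢ[ℝ] C₀(ℕ, ℝ)) (hJ : IsClosed (Set.range J))
    (hinf : ¬ FiniteDimensional ℝ X) :
    ∃ (Y : Type) (_ : NormedAddCommGroup Y) (_ : NormedSpace ℝ Y) (_ : CompleteSpace Y)
      (T : X →L[ℝ] Y),
      T ∉ closure {S : X →L[ℝ] Y | NormAttaining S} := by
  classical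
  let Tlin : X →ₗ[ℝ] Ysp :=
    { toFun := fun z => ofC0 (J z)
      map_add' := fun z w => congrArg ofC0 (J.map_add z w)
      map_smul' := fun c z => congrArg ofC0 (J.map_smul c z) }
  have hTb : ∀ z : X, ‖Tlin z‖ ≤ 3 * ‖z‖ := by
    intro z
    have h1 : ‖Tlin z‖ ≤ 3 * ‖toC0 (Tlin z)‖ := Ysp_norm_le _
    have h2 : toC0 (Tlin z) = J z := rfl
    rw [h2, J.norm_map] at h1
    exact h1
  let T : X →L[ℝ] Ysp := Tlin.mkContinuous 3 hTb
  refine ⟨Ysp, inferInstance, inferInstance, inferInstance, T, ?_⟩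
  intro hTcl
  -- every norm-attaining operator is at distance at least 1 from T
  have key : ∀ S : X →L[ℝ] Ysp, NormAttaining S → 1 ≤ ‖S - T‖ := by
    intro S hS
    obtain ⟨x, hx1, hxA⟩ := hS
    -- choose N beyond which |J x| < 1/2
    have hzx : Filter.Tendsto (⇑(J x)) (Filter.cocompact ℕ) (nhds 0) :=
      zero_at_infty (J x)
    rw [cocompact_eq_atTop] at hzx
    have hev : ∀ᶠ n in Filter.atTop, ‖J x n‖ < 1/2 := by
      obtain ⟨N, hN⟩ := Metric.tendsto_atTop.mp hzx (1/2) (by norm_num)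
      refine Filter.eventually_atTop.mpr ⟨N, fun n hn => ?_⟩
      simpa [dist_eq_norm] using hN n hn
    obtain ⟨N, hN⟩ := Filter.eventually_atTop.mp hev
    -- find a nonzero vector supported beyond N
    let K : X →ₗ[ℝ] (Fin N → ℝ) :=
      { toFun := fun z i => J z (i : ℕ)
        map_add' := fun z w => funext fun i => by simp
        map_smul' := fun c z => funext fun i => by simp }
    have hker : LinearMap.ker K ≠ ⊥ := by
      intro h
      exact hinf (FiniteDimensional.of_injective K (LinearMap.ker_eq_bot.mp h))
    obtain ⟨y, hymem, hy0⟩ := (LinearMap.ker K).ne_bot_iff.mp hker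
    have hyK : ∀ i : Fin N, J y (i : ℕ) = 0 := by
      intro i
      have : K y = 0 := LinearMap.mem_ker.mp hymem
      exact congrFun this i
    have hyn : (0:ℝ) < ‖y‖ := norm_pos_iff.mpr hy0
    set u : X := (1 / (2 * ‖y‖)) • y with hu_def
    have hu_norm : ‖u‖ = 1/2 := by
      rw [hu_def, norm_smul, Real.norm_eq_abs, abs_of_pos (by positivity)]
      field_simp
    have hu_coord : ∀ n : ℕ, n < N → J u n = 0 := by
      intro n hn
      rw [hu_def, J.map_smul, ZeroAtInftyContinuousMap.smul_apply]
      rw [hyK ⟨n, hn⟩]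
      simp
    -- the two perturbations stay in the unit ball
    have hbound : ∀ v : X, (∀ n : ℕ, n < N → J v n = 0) → ‖v‖ ≤ 1/2 → ‖x + v‖ ≤ 1 := by
      intro v hv hvn
      rw [← J.norm_map (x + v)]
      apply c0_norm_le _ (by norm_num : (0:ℝ) ≤ 1)
      intro n
      rw [J.map_add, ZeroAtInftyContinuousMap.add_apply]
      rcases lt_or_ge n N with h | h
      · rw [hv n h, add_zero]
        calc ‖J x n‖ ≤ ‖J x‖ := c0_apply_le _ n
          _ = 1 := by rw [J.norm_map, hx1]
      · have h1 : ‖J x n‖ < 1/2 := hN n h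
        have h2 : ‖J v n‖ ≤ 1/2 := by
          calc ‖J v n‖ ≤ ‖J v‖ := c0_apply_le _ n
            _ = ‖v‖ := J.norm_map v
            _ ≤ 1/2 := hvn
        calc ‖J x n + J v n‖ ≤ ‖J x n‖ + ‖J v n‖ := norm_add_le _ _
          _ ≤ 1 := by linarith
    have hxu1 : ‖x + u‖ ≤ 1 := hbound u hu_coord hu_norm.le
    have hxu2 : ‖x - u‖ ≤ 1 := by
      have hcoord : ∀ n : ℕ, n < N → J (-u) n = 0 := by
        intro n hn
        rw [J.map_neg, ZeroAtInftyContinuousMap.neg_apply, hu_coord n hn, neg_zero]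
      have := hbound (-u) hcoord (by rw [norm_neg, hu_norm])
      simpa [sub_eq_add_neg] using this
    -- norm-attainment forces equality in the triangle inequality
    set a : Ysp := S x + S u with ha_def
    set b : Ysp := S x - S u with hb_def
    have hSnn : (0:ℝ) ≤ ‖S‖ := norm_nonneg _
    have ha_le : ‖a‖ ≤ ‖S x‖ := by
      have : a = S (x + u) := by rw [ha_def, map_add]
      rw [this, hxA]
      calc ‖S (x + u)‖ ≤ ‖S‖ * ‖x + u‖ := S.le_opNorm _
        _ ≤ ‖S‖ * 1 := mul_le_mul_of_nonneg_left hxu1 hSnn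
        _ = ‖S‖ := mul_one _
    have hb_le : ‖b‖ ≤ ‖S x‖ := by
      have : b = S (x - u) := by rw [hb_def, map_sub]
      rw [this, hxA]
      calc ‖S (x - u)‖ ≤ ‖S‖ * ‖x - u‖ := S.le_opNorm _
        _ ≤ ‖S‖ * 1 := mul_le_mul_of_nonneg_left hxu2 hSnn
        _ = ‖S‖ := mul_one _
    have hab_sum : a + b = S x + S x := by rw [ha_def, hb_def]; abel
    have hsum : ‖a + b‖ = 2 * ‖S x‖ := by
      rw [hab_sum, ← two_smul ℝ (S x), norm_smul]
      norm_num
    have htri := norm_add_le a b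
    have ha_eq : ‖a‖ = ‖S x‖ := by linarith
    have hb_eq : ‖b‖ = ‖S x‖ := by linarith
    have hsum_eq : ‖a + b‖ = ‖a‖ + ‖b‖ := by linarith
    -- extract equality in the ℓ² part
    have hda : ‖a‖ = ‖toC0 a‖ + ‖Lmap (toC0 a)‖ := Ysp_norm_def a
    have hdb : ‖b‖ = ‖toC0 b‖ + ‖Lmap (toC0 b)‖ := Ysp_norm_def b
    have hdab : ‖a + b‖ = ‖toC0 a + toC0 b‖ + ‖Lmap (toC0 a) + Lmap (toC0 b)‖ := by
      have h1 : ‖a + b‖ = ‖toC0 (a+b)‖ + ‖Lmap (toC0 (a+b))‖ := Ysp_norm_def (a+b)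
      rw [h1, toC0_add, map_add]
    have hc0tri := norm_add_le (toC0 a) (toC0 b)
    have hLtri := norm_add_le (Lmap (toC0 a)) (Lmap (toC0 b))
    have hLeq : ‖Lmap (toC0 a) + Lmap (toC0 b)‖ = ‖Lmap (toC0 a)‖ + ‖Lmap (toC0 b)‖ := by
      linarith
    have hray : SameRay ℝ (Lmap (toC0 a)) (Lmap (toC0 b)) :=
      sameRay_iff_norm_add.mpr hLeq
    -- conclude S u = 0
    have hSu : S u = 0 := by
      have habSu : a - b = (2:ℝ) • S u := by
        rw [ha_def, hb_def, two_smul]; abel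
      have hcase : a = b ∨ S x = 0 := by
        rcases hray with h0 | h0 | ⟨r₁, r₂, hr₁, hr₂, hr⟩
        · right
          have haz : a = 0 := toC0_inj (Lmap_inj (by simp [h0]))
          have : ‖S x‖ = 0 := by rw [← ha_eq, haz, norm_zero]
          exact norm_eq_zero.mp this
        · right
          have hbz : b = 0 := toC0_inj (Lmap_inj (by simp [h0]))
          have : ‖S x‖ = 0 := by rw [← hb_eq, hbz, norm_zero]
          exact norm_eq_zero.mp this
        · have hr' : Lmap (toC0 (r₁ • a)) = Lmap (toC0 (r₂ • b)) := by
            rw [toC0_smul, toC0_smul, map_smul, map_smul]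
            exact hr
          have hab2 : r₁ • a = r₂ • b := toC0_inj (Lmap_inj hr')
          by_cases hsx : ‖S x‖ = 0
          · right; exact norm_eq_zero.mp hsx
          · left
            have hn1 : ‖r₁ • a‖ = r₁ * ‖S x‖ := by
              rw [norm_smul, Real.norm_eq_abs, abs_of_pos hr₁, ha_eq]
            have hn2 : ‖r₂ • b‖ = r₂ * ‖S x‖ := by
              rw [norm_smul, Real.norm_eq_abs, abs_of_pos hr₂, hb_eq]
            have hr12 : r₁ = r₂ := by
              have heq : r₁ * ‖S x‖ = r₂ * ‖S x‖ := by rw [← hn1, hab2, hn2]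
              exact mul_right_cancel₀ hsx heq
            rw [hr12] at hab2
            exact smul_right_injective Ysp (ne_of_gt hr₂) hab2
      rcases hcase with h | h
      · have : (0:Ysp) = (2:ℝ) • S u := by rw [← habSu, h, sub_self]
        have := this.symm
        rcases smul_eq_zero.mp this with h2 | h2
        · norm_num at h2
        · exact h2
      · have haz : a = 0 := by
          have : ‖a‖ = 0 := by rw [ha_eq, h, norm_zero]
          exact norm_eq_zero.mp this
        have : S x + S u = 0 := by rw [← ha_def]; exact haz
        rw [h, zero_add] at this
        exact this
    -- distance estimate
    have hTu : ‖T u‖ ≥ 1/2 := by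
      have h1 : ‖toC0 (T u)‖ ≤ ‖T u‖ := norm_toC0_le _
      have h2 : toC0 (T u) = J u := rfl
      rw [h2, J.norm_map, hu_norm] at h1
      exact h1
    have h5 : (S - T) u = -(T u) := by
      rw [ContinuousLinearMap.sub_apply, hSu, zero_sub]
    have h6 : ‖(S - T) u‖ ≤ ‖S - T‖ * ‖u‖ := (S - T).le_opNorm u
    rw [h5, norm_neg, hu_norm] at h6
    nlinarith [norm_nonneg (S - T)]
  obtain ⟨S, hSmem, hSd⟩ := Metric.mem_closure_iff.mp hTcl 1 one_pos
  have h1 : dist T S = ‖S - T‖ := by rw [dist_eq_norm, norm_sub_rev]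
  have := key S hSmem
  rw [h1] at hSd
  linarith
end
end

section
/- Let X be a real Banach space with property α; that is, suppose there exist an index set I, families (x_i)_{i∈I} in the unit sphere of X and (x*_i)_{i∈I} in the unit sphere of X*, and a constant 0 ≤ ρ < 1 such that: (i) x*_i(x_i) = 1 for all i ∈ I; (ii) |x*_i(x_j)| ≤ ρ whenever i ≠ j; (iii) the closed unit ball of X is the closed absolutely convex hull of { x_i : i ∈ I }. Then X has property A^k: for every real Banach space Y, every compact bounded linear operator T : X → Y and every ε > 0, there is a norm attaining compact bounded linear operator S : X → Y with ‖T − S‖ ≤ ε‖T‖. -/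
/-- Schachermayer's property α implies property A^k: if `X` has property α (witnessed by
families `(x i)` in `S_X`, `(x' i)` in `S_{X*}` and a constant `0 ≤ ρ < 1` such that
`x' i (x i) = 1`, `|x' i (x j)| ≤ ρ` for `i ≠ j`, and the closed unit ball of `X` is the closed
absolutely convex hull of `{x i}`), then for every real Banach space `Y`, every compact operator
`T : X → Y` and every `ε > 0` there is a norm attaining compact operator `S : X → Y` with
`‖T - S‖ ≤ ε * ‖T‖`. -/
theorem stmt_13 (X : Type*) [NormedAddCommGroup X] [NormedSpace ℝ X] [CompleteSpace X]
    (I : Type*) (x : I → X) (x' : I → StrongDual ℝ X) (ρ : ℝ)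
    (hρ₀ : 0 ≤ ρ) (hρ₁ : ρ < 1)
    (hx : ∀ i, ‖x i‖ = 1) (hx' : ∀ i, ‖x' i‖ = 1)
    (h1 : ∀ i, x' i (x i) = 1)
    (h2 : ∀ i j, i ≠ j → |x' i (x j)| ≤ ρ)
    (h3 : closure (convexHull ℝ (Set.range x ∪ Set.range fun i => -x i))
        = Metric.closedBall (0 : X) 1) :
    ∀ (Y : Type) [NormedAddCommGroup Y] [NormedSpace ℝ Y] [CompleteSpace Y],
      ∀ T : X →L[ℝ] Y, IsCompactOperator T → ∀ ε : ℝ, 0 < ε →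
        ∃ S : X →L[ℝ] Y, IsCompactOperator S ∧ NormAttaining S ∧ ‖T - S‖ ≤ ε * ‖T‖ := by
  intro Y _ _ _ T hT ε hε
  -- `I` is nonempty
  have hInonempty : Nonempty I := by
    by_contra hI
    rw [not_nonempty_iff] at hI
    have : (Set.range x ∪ Set.range fun i => -x i) = ∅ := by
      simp [Set.range_eq_empty]
    rw [this] at h3
    simp only [convexHull_empty, closure_empty] at h3
    have : (0 : X) ∈ Metric.closedBall (0 : X) 1 := by simp
    rw [← h3] at this
    exact this
  obtain ⟨i₁⟩ := hInonempty
  -- key lemma: the operator norm is determined by the values on the `x i`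
  have key : ∀ (U : X →L[ℝ] Y) (C : ℝ), 0 ≤ C → (∀ i, ‖U (x i)‖ ≤ C) → ‖U‖ ≤ C := by
    intro U C hC hUC
    apply ContinuousLinearMap.opNorm_le_of_unit_norm hC
    intro z hz
    have hzball : z ∈ Metric.closedBall (0 : X) 1 := by
      simp [hz]
    rw [← h3] at hzball
    have hsub : closure (convexHull ℝ (Set.range x ∪ Set.range fun i => -x i))
        ⊆ U ⁻¹' Metric.closedBall (0 : Y) C := by
      apply closure_minimal
      · apply convexHull_min
        · rintro w (⟨i, rfl⟩ | ⟨i, rfl⟩)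
          · simpa [mem_closedBall_zero_iff] using hUC i
          · simp only [Set.mem_preimage, map_neg, mem_closedBall_zero_iff, norm_neg]
            exact hUC i
        · exact (convex_closedBall (0 : Y) C).linear_preimage (U : X →ₗ[ℝ] Y)
      · exact (Metric.isClosed_closedBall).preimage U.continuous
    have := hsub hzball
    simpa [mem_closedBall_zero_iff] using this
  by_cases hT0 : ‖T‖ = 0
  · refine ⟨T, hT, ⟨x i₁, hx i₁, ?_⟩, ?_⟩
    · rw [norm_eq_zero.mp hT0]; simp
    · simp [hT0]
  · have hTpos : 0 < ‖T‖ := lt_of_le_of_ne (norm_nonneg T) (Ne.symm hT0)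
    set η : ℝ := ε * (1 - ρ) / (1 + ε) with hη_def
    have hεpos : (0:ℝ) < 1 + ε := by linarith
    have hηpos : 0 < η := by
      apply div_pos (mul_pos hε (by linarith)) hεpos
    have hηlt1 : η < 1 := by
      rw [div_lt_one hεpos]
      nlinarith
    -- choose `i₀` with `‖T (x i₀)‖ > (1 - η) * ‖T‖`
    have hex : ∃ i₀, (1 - η) * ‖T‖ < ‖T (x i₀)‖ := by
      by_contra hcon
      push_neg at hcon
      have := key T ((1 - η) * ‖T‖)
        (mul_nonneg (by linarith) (norm_nonneg T)) hcon
      nlinarith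
    obtain ⟨i₀, hi₀⟩ := hex
    set S : X →L[ℝ] Y := T + ε • (x' i₀).smulRight (T (x i₀)) with hS_def
    have hSapp : ∀ z, S z = T z + (ε * x' i₀ z) • T (x i₀) := by
      intro z
      simp [hS_def, ContinuousLinearMap.smulRight_apply, smul_smul]
    have hScomp : IsCompactOperator S := by
      have hcomp : IsCompactOperator (x' i₀ : X → ℝ) := by
        refine ⟨Metric.closedBall (0:ℝ) ‖x' i₀‖, isCompact_closedBall _ _, ?_⟩
        apply Filter.mem_of_superset (Metric.closedBall_mem_nhds (0:X) one_pos)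
        intro z hz
        simp only [Set.mem_preimage, mem_closedBall_zero_iff]
        calc ‖x' i₀ z‖ ≤ ‖x' i₀‖ * ‖z‖ := (x' i₀).le_opNorm z
          _ ≤ ‖x' i₀‖ * 1 := by
              apply mul_le_mul_of_nonneg_left _ (norm_nonneg _)
              simpa [mem_closedBall_zero_iff] using hz
          _ = ‖x' i₀‖ := mul_one _
      have := hcomp.continuous_comp (g := fun t : ℝ => t • T (x i₀))
        (continuous_id.smul continuous_const)
      have hfun : ⇑((x' i₀).smulRight (T (x i₀)))
          = (fun t : ℝ => t • T (x i₀)) ∘ ⇑(x' i₀) := by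
        ext z
        simp only [ContinuousLinearMap.smulRight_apply, Function.comp_apply]
      have hrank : IsCompactOperator ⇑((x' i₀).smulRight (T (x i₀))) := by
        rw [hfun]; exact this
      have hsmul : IsCompactOperator ⇑(ε • (x' i₀).smulRight (T (x i₀))) := by
        rw [ContinuousLinearMap.coe_smul']
        exact hrank.smul ε
      have hadd := hT.add hsmul
      rw [hS_def, ContinuousLinearMap.coe_add']
      exact hadd
    -- value at x i₀
    have hSxi₀ : S (x i₀) = (1 + ε) • T (x i₀) := by
      rw [hSapp, h1 i₀]
      rw [add_smul, one_smul, mul_one]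
    have hnormSxi₀ : ‖S (x i₀)‖ = (1 + ε) * ‖T (x i₀)‖ := by
      rw [hSxi₀, norm_smul, Real.norm_eq_abs, abs_of_pos hεpos]
    -- bound on the other x j
    have hbound : ∀ j, ‖S (x j)‖ ≤ (1 + ε) * ‖T (x i₀)‖ := by
      intro j
      by_cases hj : j = i₀
      · rw [hj, hnormSxi₀]
      · have h2j := h2 i₀ j (fun h => hj h.symm)
        have hTxj : ‖T (x j)‖ ≤ ‖T‖ := by
          calc ‖T (x j)‖ ≤ ‖T‖ * ‖x j‖ := T.le_opNorm _
            _ = ‖T‖ := by rw [hx j, mul_one]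
        have hTxi₀le : ‖T (x i₀)‖ ≤ ‖T‖ := by
          calc ‖T (x i₀)‖ ≤ ‖T‖ * ‖x i₀‖ := T.le_opNorm _
            _ = ‖T‖ := by rw [hx i₀, mul_one]
        calc ‖S (x j)‖ = ‖T (x j) + (ε * x' i₀ (x j)) • T (x i₀)‖ := by rw [hSapp]
          _ ≤ ‖T (x j)‖ + ‖(ε * x' i₀ (x j)) • T (x i₀)‖ := norm_add_le _ _
          _ = ‖T (x j)‖ + |ε * x' i₀ (x j)| * ‖T (x i₀)‖ := by
              rw [norm_smul, Real.norm_eq_abs]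
          _ ≤ ‖T‖ + ε * ρ * ‖T‖ := by
              have h1' : |ε * x' i₀ (x j)| ≤ ε * ρ := by
                rw [abs_mul, abs_of_pos hε]
                exact mul_le_mul_of_nonneg_left h2j (le_of_lt hε)
              have := mul_le_mul h1' hTxi₀le (norm_nonneg _)
                (mul_nonneg (le_of_lt hε) hρ₀)
              linarith
          _ = (1 + ε * ρ) * ‖T‖ := by ring
          _ = (1 + ε) * ((1 - η) * ‖T‖) := by
              have hkey2 : (1 + ε) * (1 - η) = 1 + ε * ρ := by
                rw [hη_def]; field_simp; ring
              rw [← mul_assoc, hkey2]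
          _ ≤ (1 + ε) * ‖T (x i₀)‖ := by
              apply mul_le_mul_of_nonneg_left (le_of_lt hi₀) (le_of_lt hεpos)
    have hSnorm_le : ‖S‖ ≤ (1 + ε) * ‖T (x i₀)‖ := by
      apply key S _ (mul_nonneg (le_of_lt hεpos) (norm_nonneg _)) hbound
    have hSnorm_ge : (1 + ε) * ‖T (x i₀)‖ ≤ ‖S‖ := by
      calc (1 + ε) * ‖T (x i₀)‖ = ‖S (x i₀)‖ := hnormSxi₀.symm
        _ ≤ ‖S‖ * ‖x i₀‖ := S.le_opNorm _
        _ = ‖S‖ := by rw [hx i₀, mul_one]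
    refine ⟨S, hScomp, ⟨x i₀, hx i₀, ?_⟩, ?_⟩
    · rw [hnormSxi₀]
      exact le_antisymm hSnorm_ge hSnorm_le
    · have : T - S = -(ε • (x' i₀).smulRight (T (x i₀))) := by
        rw [hS_def]; abel
      have heq : ε • (x' i₀).smulRight (T (x i₀))
          = (x' i₀).smulRight (ε • T (x i₀)) := by
        ext z
        simp only [ContinuousLinearMap.smul_apply, ContinuousLinearMap.smulRight_apply]
        rw [smul_comm]
      rw [this, norm_neg, heq, ContinuousLinearMap.norm_smulRight_apply, hx' i₀,
        one_mul, norm_smul, Real.norm_eq_abs, abs_of_pos hε]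
      apply mul_le_mul_of_nonneg_left _ (le_of_lt hε)
      calc ‖T (x i₀)‖ ≤ ‖T‖ * ‖x i₀‖ := T.le_opNorm _
        _ = ‖T‖ := by rw [hx i₀, mul_one]
end

section
/- Let X be a real Banach space having Lindenstrauss property A and such that the dual space X* has the approximation property. Then X has property A^k: for every real Banach space Y, the set of norm attaining compact operators from X to Y is dense in operator norm in the space of all compact operators from X to Y. -/
open NormedSpace

section Helpers
variable {X : Type*} [NormedAddCommGroup X] [NormedSpace ℝ X]

theorem helly_exact (f : StrongDual ℝ (StrongDual ℝ X)) (s : Finset (StrongDual ℝ X)) :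
    ∃ x : X, ∀ φ ∈ s, φ x = f φ := by
  classical
  set ev : X →ₗ[ℝ] (s → ℝ) := LinearMap.pi (fun j => ((j : StrongDual ℝ X) : X →ₗ[ℝ] ℝ)) with hev
  set W : Submodule ℝ (s → ℝ) := LinearMap.range ev with hW
  have hsingle : ∀ (c : ℝ) (j : s), (Pi.single j c : s → ℝ) = c • (Pi.single j 1 : s → ℝ) := by
    intro c j; ext k; by_cases h : k = j <;> simp [Pi.single_apply, h]
  by_cases hv : (fun j : s => f (j : StrongDual ℝ X)) ∈ W
  · obtain ⟨x, hx⟩ := hv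
    exact ⟨x, fun φ hφ => congrFun hx ⟨φ, hφ⟩⟩
  · exfalso
    obtain ⟨ℓ, hℓv, hℓW⟩ := Submodule.exists_dual_map_eq_bot_of_notMem hv inferInstance
    set φstar : StrongDual ℝ X := ∑ j : s, ℓ (Pi.single j 1) • (j : StrongDual ℝ X) with hφstar
    have hzero : φstar = 0 := by
      ext x
      have h2 : ℓ (ev x) = 0 := by
        have : ℓ (ev x) ∈ W.map ℓ := Submodule.mem_map_of_mem ⟨x, rfl⟩
        rw [hℓW] at this; simpa using this
      have h3 : ℓ (ev x) = ∑ j : s, ℓ (Pi.single j 1) * (j : StrongDual ℝ X) x := by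
        conv_lhs => rw [show ev x = ∑ j : s, Pi.single j (ev x j) from
          (Finset.univ_sum_single (ev x)).symm]
        rw [map_sum]
        refine Finset.sum_congr rfl fun j _ => ?_
        rw [hsingle (ev x j) j, map_smul, smul_eq_mul]
        simp only [hev, LinearMap.pi_apply, ContinuousLinearMap.coe_coe]
        ring
      simp only [hφstar, ContinuousLinearMap.coe_sum', Finset.sum_apply,
        ContinuousLinearMap.coe_smul', Pi.smul_apply, smul_eq_mul,
        ContinuousLinearMap.zero_apply]
      rw [← h3, h2]
    have h4 : f φstar = ℓ (fun j : s => f (j : StrongDual ℝ X)) := by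
      rw [hφstar, map_sum]
      conv_rhs => rw [show (fun j : s => f (j : StrongDual ℝ X)) = ∑ j : s, Pi.single j (f (j:StrongDual ℝ X))
        from (Finset.univ_sum_single _).symm]
      rw [map_sum]
      refine Finset.sum_congr rfl fun j _ => ?_
      rw [hsingle (f (j:StrongDual ℝ X)) j, map_smul, map_smul, smul_eq_mul, smul_eq_mul]
      ring
    rw [hzero, map_zero] at h4
    exact hℓv h4.symm


theorem helly_bound (f : StrongDual ℝ (StrongDual ℝ X)) (s : Finset (StrongDual ℝ X)) {δ : ℝ} (hδ : 0 < δ) :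
    ∃ x : X, (∀ φ ∈ s, φ x = f φ) ∧ ‖x‖ ≤ ‖f‖ + δ := by
  classical
  obtain ⟨x₀, hx₀⟩ := helly_exact f s
  set evL : X →L[ℝ] (s → ℝ) := ContinuousLinearMap.pi (fun j => (j : StrongDual ℝ X)) with hevL
  set W₀ : Submodule ℝ X := LinearMap.ker (evL : X →ₗ[ℝ] (s → ℝ)) with hW₀
  haveI hWc : IsClosed (W₀ : Set X) := ContinuousLinearMap.isClosed_ker evL
  set Q := X ⧸ W₀ with hQ
  -- quotient map as a CLM
  set mkC : X →L[ℝ] Q := LinearMap.mkContinuous W₀.mkQ 1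
    (fun x => by rw [one_mul]; exact Submodule.Quotient.norm_mk_le W₀ x) with hmkC
  have hmkC_apply : ∀ x : X, mkC x = Submodule.Quotient.mk x := fun x => rfl
  have hmk_norm : ‖(Submodule.Quotient.mk x₀ : Q)‖ ≤ ‖f‖ := by
    by_cases h0 : (Submodule.Quotient.mk x₀ : Q) = 0
    · rw [h0, norm_zero]; exact norm_nonneg f
    · obtain ⟨g, hg1, hg2'⟩ := exists_dual_vector ℝ _ (norm_ne_zero_iff.2 h0)
      have hg2 : g (Submodule.Quotient.mk x₀) = ‖(Submodule.Quotient.mk x₀ : Q)‖ := by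
        exact_mod_cast hg2'
      set ξ : StrongDual ℝ X := g.comp mkC with hξ
      have hξ_le : ∀ x : X, ‖ξ x‖ ≤ ‖x‖ := by
        intro x
        calc ‖g (mkC x)‖ ≤ ‖g‖ * ‖mkC x‖ := g.le_opNorm _
        _ ≤ 1 * ‖x‖ := by
            rw [hg1]
            exact mul_le_mul_of_nonneg_left (by
              rw [hmkC_apply]; exact Submodule.Quotient.norm_mk_le W₀ x) zero_le_one
        _ = ‖x‖ := one_mul _
      have hker : ⨅ (j : s), LinearMap.ker ((j : StrongDual ℝ X) : X →ₗ[ℝ] ℝ)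
          ≤ LinearMap.ker (ξ : X →ₗ[ℝ] ℝ) := by
        intro x hx
        rw [Submodule.mem_iInf] at hx
        have hxW : x ∈ W₀ := by
          rw [hW₀, LinearMap.mem_ker]
          funext j
          simpa [hevL] using hx j
        have : (Submodule.Quotient.mk x : Q) = 0 := (Submodule.Quotient.mk_eq_zero _).2 hxW
        simp only [LinearMap.mem_ker, ContinuousLinearMap.coe_coe, hξ,
          ContinuousLinearMap.comp_apply, hmkC_apply, this, map_zero]
      have hspan := mem_span_of_iInf_ker_le_ker (𝕜 := ℝ)
        (L := fun j : s => ((j : StrongDual ℝ X) : X →ₗ[ℝ] ℝ)) (K := (ξ : X →ₗ[ℝ] ℝ)) hker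
      obtain ⟨c, hc⟩ := (Submodule.mem_span_range_iff_exists_fun ℝ).1 hspan
      set ψ : StrongDual ℝ X := ∑ j : s, c j • (j : StrongDual ℝ X) with hψ
      have hψξ : ∀ x, ψ x = ξ x := by
        intro x
        have := LinearMap.congr_fun hc x
        simpa [hψ, ContinuousLinearMap.coe_sum', Finset.sum_apply] using this
      have hψx₀ : ψ x₀ = f ψ := by
        rw [hψ, map_sum]
        simp only [ContinuousLinearMap.coe_sum', Finset.sum_apply,
          ContinuousLinearMap.coe_smul', Pi.smul_apply, smul_eq_mul, map_smul]
        refine Finset.sum_congr rfl fun j _ => ?_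
        rw [hx₀ (j : StrongDual ℝ X) j.2]
      have hξnorm : ‖ψ‖ ≤ 1 := by
        apply ContinuousLinearMap.opNorm_le_bound _ zero_le_one
        intro x; rw [hψξ x, one_mul]; exact hξ_le x
      have : ‖(Submodule.Quotient.mk x₀ : Q)‖ = ψ x₀ := by
        rw [hψξ x₀, hξ, ContinuousLinearMap.comp_apply, hmkC_apply, hg2]
      rw [this, hψx₀]
      calc f ψ ≤ ‖f ψ‖ := le_abs_self _
      _ ≤ ‖f‖ * ‖ψ‖ := f.le_opNorm ψ
      _ ≤ ‖f‖ * 1 := mul_le_mul_of_nonneg_left hξnorm (norm_nonneg f)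
      _ = ‖f‖ := mul_one _
  obtain ⟨m, hm1, hm2⟩ := Submodule.Quotient.norm_mk_lt (Submodule.Quotient.mk x₀ : Q) hδ
  refine ⟨m, ?_, ?_⟩
  · intro φ hφ
    have hsub : m - x₀ ∈ W₀ := by
      rw [← Submodule.Quotient.mk_eq_zero]
      rw [Submodule.Quotient.mk_sub, hm1, sub_self]
    have : evL (m - x₀) = 0 := hsub
    have hφ0 : φ (m - x₀) = 0 := by
      have := congrFun this ⟨φ, hφ⟩
      simpa [hevL] using this
    have : φ m = φ x₀ := by rw [← sub_eq_zero, ← map_sub]; exact hφ0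
    rw [this, hx₀ φ hφ]
  · linarith


theorem helly_compact (f : StrongDual ℝ (StrongDual ℝ X)) {K : Set (StrongDual ℝ X)} (hK : IsCompact K)
    {δ : ℝ} (hδ : 0 < δ) : ∃ x : X, ∀ φ ∈ K, |f φ - φ x| ≤ δ := by
  classical
  set η : ℝ := δ / (2 * ‖f‖ + 2) with hη
  have hηpos : 0 < η := div_pos hδ (by positivity)
  obtain ⟨t, htf, hcover⟩ := Metric.totallyBounded_iff.1 hK.totallyBounded η hηpos
  obtain ⟨x, hx1, hx2⟩ := helly_bound f htf.toFinset one_pos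
  refine ⟨x, fun φ hφ => ?_⟩
  obtain ⟨ψ, hψt, hψd⟩ := by
    have := hcover hφ
    simpa only [Set.mem_iUnion, exists_prop] using this
  have hψx : ψ x = f ψ := hx1 ψ (htf.mem_toFinset.2 hψt)
  have hd : ‖φ - ψ‖ < η := by rw [← dist_eq_norm]; exact hψd
  have e1 : |f φ - f ψ| ≤ ‖f‖ * η := by
    rw [← map_sub]
    calc |f (φ - ψ)| ≤ ‖f‖ * ‖φ - ψ‖ := f.le_opNorm _
    _ ≤ ‖f‖ * η := mul_le_mul_of_nonneg_left hd.le (norm_nonneg f)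
  have e2 : |ψ x - φ x| ≤ (‖f‖ + 1) * η := by
    have : |(ψ - φ) x| ≤ ‖ψ - φ‖ * ‖x‖ := (ψ - φ).le_opNorm x
    rw [ContinuousLinearMap.sub_apply] at this
    calc |ψ x - φ x| ≤ ‖ψ - φ‖ * ‖x‖ := this
    _ ≤ η * (‖f‖ + 1) := by
        apply mul_le_mul _ hx2 (norm_nonneg x) hηpos.le
        rw [← neg_sub, norm_neg]; exact hd.le
    _ = (‖f‖ + 1) * η := mul_comm _ _
  calc |f φ - φ x| = |(f φ - f ψ) + (ψ x - φ x)| := by rw [hψx]; ring_nf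
  _ ≤ |f φ - f ψ| + |ψ x - φ x| := abs_add_le _ _
  _ ≤ ‖f‖ * η + (‖f‖ + 1) * η := add_le_add e1 e2
  _ ≤ (2 * ‖f‖ + 2) * η := by nlinarith [norm_nonneg f, hηpos.le]
  _ = δ := by rw [hη]; field_simp


theorem schauder_compactK {Y : Type*} [NormedAddCommGroup Y] [NormedSpace ℝ Y]
    {T : X →L[ℝ] Y} (hT : IsCompactOperator T) :
    IsCompact (closure {φ : StrongDual ℝ X | ∃ y : StrongDual ℝ Y, ‖y‖ ≤ 1 ∧ y.comp T = φ}) := by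
  classical
  apply TotallyBounded.isCompact_of_isClosed _ isClosed_closure
  apply TotallyBounded.closure
  rw [Metric.totallyBounded_iff]
  intro δ hδ
  obtain ⟨K₀, hK₀, hTK₀⟩ := hT
  obtain ⟨r, hr, hball⟩ := Metric.mem_nhds_iff.1 hTK₀
  set C : Set Y := (fun y => (2 / r) • y) '' K₀ with hC
  have hCc : IsCompact C := hK₀.image (continuous_const_smul _)
  have hTC : ∀ x : X, ‖x‖ ≤ 1 → T x ∈ C := by
    intro x hx
    have h1 : (r / 2) • x ∈ Metric.ball (0 : X) r := by
      rw [Metric.mem_ball, dist_zero_right, norm_smul]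
      have : ‖r / 2‖ = r / 2 := abs_of_pos (by linarith)
      rw [this]
      nlinarith
    have h2 : T ((r / 2) • x) ∈ K₀ := hball h1
    refine ⟨T ((r / 2) • x), h2, ?_⟩
    show (2 / r) • T ((r / 2) • x) = T x
    rw [map_smul, smul_smul, show (2 / r) * (r / 2) = 1 by field_simp, one_smul]
  obtain ⟨t, htf, htC⟩ := Metric.totallyBounded_iff.1 hCc.totallyBounded (δ/5) (by positivity)
  set tF := htf.toFinset with htF
  set Ψ : StrongDual ℝ Y → (tF → ℝ) := fun y c => y (c : Y) with hΨ
  set B : Set (StrongDual ℝ Y) := {y | ‖y‖ ≤ 1} with hB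
  set M : NNReal := tF.sup fun c => ‖(c : Y)‖₊ with hM
  have hbd : TotallyBounded (Ψ '' B) := by
    apply TotallyBounded.subset _ (isCompact_closedBall (0 : tF → ℝ) M).totallyBounded
    rintro - ⟨y, hy, rfl⟩
    rw [Metric.mem_closedBall]
    refine dist_pi_le_iff M.coe_nonneg |>.2 fun c => ?_
    rw [Pi.zero_apply, Real.dist_eq, sub_zero]
    calc |y (c : Y)| ≤ ‖y‖ * ‖(c : Y)‖ := y.le_opNorm _
    _ ≤ 1 * ‖(c : Y)‖ := mul_le_mul_of_nonneg_right hy (norm_nonneg _)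
    _ = ‖(c : Y)‖ := one_mul _
    _ ≤ M := by exact_mod_cast Finset.le_sup (f := fun c => ‖(c : Y)‖₊) c.2
  obtain ⟨u, husub, huf, hucov⟩ := Metric.finite_approx_of_totallyBounded hbd (δ/5) (by positivity)
  haveI := huf.to_subtype
  choose y' hy'B hy'Ψ using fun w : u => husub w.2
  refine ⟨Set.range (fun w : u => (y' w).comp T), Set.finite_range _, ?_⟩
  rintro - ⟨y, hy, rfl⟩
  have hyB : y ∈ B := hy
  have hΨy : Ψ y ∈ Ψ '' B := ⟨y, hyB, rfl⟩
  obtain ⟨w, hwu, hwd⟩ := by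
    have := hucov hΨy
    simpa only [Set.mem_iUnion, exists_prop] using this
  set y'' := y' ⟨w, hwu⟩ with hy''
  have hΨd : dist (Ψ y) (Ψ y'') < δ / 5 := by rw [hy'', hy'Ψ ⟨w, hwu⟩]; exact hwd
  have hptwise : ∀ c : tF, |y (c : Y) - y'' (c : Y)| < δ / 5 := by
    intro c
    have := (dist_pi_lt_iff (by positivity)).1 hΨd c
    rwa [Real.dist_eq] at this
  have hnormsub : ‖y - y''‖ ≤ 2 := by
    calc ‖y - y''‖ ≤ ‖y‖ + ‖y''‖ := norm_sub_le _ _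
    _ ≤ 1 + 1 := add_le_add hyB (hy'B ⟨w, hwu⟩)
    _ = 2 := by norm_num
  have hkey : ‖y.comp T - y''.comp T‖ ≤ 3 * δ / 5 := by
    rw [← ContinuousLinearMap.sub_comp]
    apply ContinuousLinearMap.opNorm_le_bound _ (by positivity)
    intro x
    by_cases hx : x = 0
    · simp [hx]
    · set u0 : X := ‖x‖⁻¹ • x with hu0
      have hxn : (0 : ℝ) < ‖x‖ := norm_pos_iff.2 hx
      have hu0n : ‖u0‖ = 1 := by
        rw [hu0, norm_smul, norm_inv, norm_norm, inv_mul_cancel₀ hxn.ne']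
      have hTu0 : T u0 ∈ C := hTC u0 hu0n.le
      obtain ⟨c, hct, hcd⟩ := by
        have := htC hTu0
        simpa only [Set.mem_iUnion, exists_prop] using this
      have hctF : c ∈ tF := htf.mem_toFinset.2 hct
      have est : |(y - y'') (T u0)| ≤ 3 * δ / 5 := by
        have e1 : |(y - y'') (T u0 - c)| ≤ 2 * (δ / 5) := by
          calc |(y - y'') (T u0 - c)| ≤ ‖y - y''‖ * ‖T u0 - c‖ := (y - y'').le_opNorm _
          _ ≤ 2 * (δ / 5) := by
              apply mul_le_mul hnormsub _ (norm_nonneg _) (by norm_num)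
              rw [← dist_eq_norm]; exact hcd.le
        have e2 : |(y - y'') c| < δ / 5 := by
          have := hptwise ⟨c, hctF⟩
          simpa [ContinuousLinearMap.sub_apply] using this
        calc |(y - y'') (T u0)| = |(y - y'') (T u0 - c) + (y - y'') c| := by
              rw [map_sub]; ring_nf
        _ ≤ |(y - y'') (T u0 - c)| + |(y - y'') c| := abs_add_le _ _
        _ ≤ 2 * (δ / 5) + δ / 5 := add_le_add e1 e2.le
        _ = 3 * δ / 5 := by ring
      have hxu : x = ‖x‖ • u0 := by
        rw [hu0, smul_smul, mul_inv_cancel₀ hxn.ne', one_smul]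
      calc ‖((y - y'').comp T) x‖ = |(y - y'') (T x)| := rfl
      _ = ‖x‖ * |(y - y'') (T u0)| := by
          conv_lhs => rw [hxu]
          rw [map_smul, map_smul, smul_eq_mul, abs_mul, abs_of_pos hxn]
      _ ≤ ‖x‖ * (3 * δ / 5) := mul_le_mul_of_nonneg_left est hxn.le
      _ = 3 * δ / 5 * ‖x‖ := mul_comm _ _
  refine Set.mem_iUnion.2 ⟨(y' ⟨w, hwu⟩).comp T, Set.mem_iUnion.2 ⟨⟨⟨w, hwu⟩, rfl⟩, ?_⟩⟩
  rw [Metric.mem_ball, dist_eq_norm]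
  calc ‖y.comp T - y''.comp T‖ ≤ 3 * δ / 5 := hkey
  _ < δ := by linarith

end Helpers

def HasApproximationProperty (E : Type*) [NormedAddCommGroup E] [NormedSpace ℝ E] : Prop :=
  ∀ K : Set E, IsCompact K → ∀ ε : ℝ, 0 < ε → ∃ R : E →L[ℝ] E,
    FiniteDimensional ℝ (LinearMap.range (R : E →ₗ[ℝ] E)) ∧ ∀ x ∈ K, ‖x - R x‖ < ε

set_option maxHeartbeats 1000000 in
/-- If a real Banach space `X` has Lindenstrauss property A (norm attaining operators from `X`
into any Banach space are dense in the operators) and `X*` has the approximation property, then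
`X` has property A^k: for every real Banach space `Y`, the norm attaining compact operators
from `X` to `Y` are dense in the compact operators. -/
theorem stmt_17 (X : Type*) [NormedAddCommGroup X] [NormedSpace ℝ X] [CompleteSpace X]
    (hA : ∀ (Z : Type) [NormedAddCommGroup Z] [NormedSpace ℝ Z] [CompleteSpace Z],
      ∀ T : X →L[ℝ] Z, T ∈ closure {S : X →L[ℝ] Z | NormAttaining S})
    (hAP : HasApproximationProperty (StrongDual ℝ X)) :
    ∀ (Y : Type) [NormedAddCommGroup Y] [NormedSpace ℝ Y] [CompleteSpace Y],
      ∀ T : X →L[ℝ] Y, IsCompactOperator T →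
        T ∈ closure {S : X →L[ℝ] Y | IsCompactOperator S ∧ NormAttaining S} := by
  classical
  intro Y _ _ _ T hT
  rw [Metric.mem_closure_iff]
  intro ε hε
  set ε' : ℝ := ε / 4 with hε'
  have hε'pos : 0 < ε' := by positivity
  set A : Set (StrongDual ℝ X) := {φ : StrongDual ℝ X | ∃ y : StrongDual ℝ Y, ‖y‖ ≤ 1 ∧ y.comp T = φ} with hA0
  have hK : IsCompact (closure A) := schauder_compactK hT
  obtain ⟨R, hRfd, hRapp⟩ := hAP (closure A) hK ε' hε'pos
  haveI := hRfd
  set V : Submodule ℝ (StrongDual ℝ X) := LinearMap.range (R : StrongDual ℝ X →ₗ[ℝ] StrongDual ℝ X) with hV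
  set n : ℕ := Module.finrank ℝ V with hn
  haveI : Module.Free ℝ V := Module.Free.of_divisionRing ℝ V
  set b : Module.Basis (Fin n) ℝ V := Module.finBasis ℝ V with hb
  set Rres : StrongDual ℝ X →L[ℝ] V :=
    R.codRestrict V (fun φ => LinearMap.mem_range_self _ φ) with hRres
  set fi : Fin n → StrongDual ℝ (StrongDual ℝ X) :=
    fun i => (LinearMap.toContinuousLinearMap (E := V) (𝕜 := ℝ) (F' := ℝ) (b.coord i)).comp Rres with hfi
  set ψ : Fin n → StrongDual ℝ X := fun i => (b i : StrongDual ℝ X) with hψ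
  have hRdecomp : ∀ φ : StrongDual ℝ X, R φ = ∑ i, (fi i φ) • ψ i := by
    intro φ
    have h1 : (((∑ i, b.repr (Rres φ) i • b i : V) : StrongDual ℝ X)) = R φ := by
      rw [b.sum_repr (Rres φ)]; rfl
    rw [← h1]
    push_cast
    rfl
  -- choose interpolation points
  set δf : Fin n → ℝ := fun i => ε' / ((n + 1) * (‖ψ i‖ + 1)) with hδf
  have hδfpos : ∀ i, 0 < δf i := fun i => by
    apply div_pos hε'pos
    positivity
  choose xv hxv using fun i : Fin n => helly_compact (fi i) hK (hδfpos i)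
  -- finite rank approximation of T
  set P : X →L[ℝ] X := ∑ i, (ψ i).smulRight (xv i) with hP
  set F : X →L[ℝ] Y := T.comp P with hF
  have hPz : ∀ z : X, P z = ∑ i, (ψ i z) • xv i := by
    intro z
    rw [hP]
    simp [ContinuousLinearMap.smulRight_apply]
  -- the sum of errors is at most ε'
  have hsum : ∑ i, ‖ψ i‖ * δf i ≤ ε' := by
    have hterm : ∀ i : Fin n, ‖ψ i‖ * δf i ≤ ε' / (n + 1) := by
      intro i
      have h1 : (0:ℝ) ≤ ‖ψ i‖ := norm_nonneg _
      have h2 : (0:ℝ) < (n:ℝ) + 1 := by positivity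
      have h3 : (0:ℝ) < ‖ψ i‖ + 1 := by linarith
      show ‖ψ i‖ * (ε' / ((↑n + 1) * (‖ψ i‖ + 1))) ≤ ε' / (↑n + 1)
      have hid : ‖ψ i‖ * (ε' / ((↑n + 1) * (‖ψ i‖ + 1)))
          = (ε' / (↑n + 1)) * (‖ψ i‖ / (‖ψ i‖ + 1)) := by
        field_simp
      rw [hid]
      have hle1 : ‖ψ i‖ / (‖ψ i‖ + 1) ≤ 1 := by
        rw [div_le_one h3]; linarith
      calc (ε' / (↑n + 1)) * (‖ψ i‖ / (‖ψ i‖ + 1)) ≤ (ε' / (↑n + 1)) * 1 :=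
            mul_le_mul_of_nonneg_left hle1 (by positivity)
      _ = ε' / (↑n + 1) := mul_one _
    calc ∑ i, ‖ψ i‖ * δf i ≤ ∑ _i : Fin n, ε' / (n + 1) :=
          Finset.sum_le_sum fun i _ => hterm i
    _ = n * (ε' / (n + 1)) := by rw [Finset.sum_const]; simp [mul_comm]
    _ ≤ ε' := by
        rw [mul_div_assoc', div_le_iff₀ (by positivity)]
        nlinarith [hε'pos.le, Nat.cast_nonneg (α := ℝ) n]
  -- key estimate : ‖T - F‖ ≤ 2 ε'
  have hTF : ‖T - F‖ ≤ 2 * ε' := by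
    apply ContinuousLinearMap.opNorm_le_bound _ (by positivity)
    intro z
    rw [ContinuousLinearMap.sub_apply]
    apply norm_le_dual_bound ℝ (T z - F z) (by positivity)
    intro y
    by_cases hy : y = 0
    · simp [hy]
    · have hyn : (0:ℝ) < ‖y‖ := norm_pos_iff.2 hy
      set y1 : StrongDual ℝ Y := ‖y‖⁻¹ • y with hy1
      have hy1n : ‖y1‖ = 1 := by
        rw [hy1, norm_smul, norm_inv, norm_norm, inv_mul_cancel₀ hyn.ne']
      set φ : StrongDual ℝ X := y1.comp T with hφdef
      have hφA : φ ∈ closure A := subset_closure ⟨y1, hy1n.le, rfl⟩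
      -- estimate |φ z - φ (P z)|
      have e1 : |φ z - R φ z| ≤ ε' * ‖z‖ := by
        calc |φ z - R φ z| = ‖(φ - R φ) z‖ := by rw [ContinuousLinearMap.sub_apply]; rfl
        _ ≤ ‖φ - R φ‖ * ‖z‖ := (φ - R φ).le_opNorm z
        _ ≤ ε' * ‖z‖ := mul_le_mul_of_nonneg_right (hRapp φ hφA).le (norm_nonneg z)
      have e2 : |R φ z - φ (P z)| ≤ ε' * ‖z‖ := by
        have hRφz : R φ z = ∑ i, (fi i φ) * (ψ i z) := by
          rw [hRdecomp φ]
          simp [ContinuousLinearMap.coe_sum', Finset.sum_apply, smul_eq_mul]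
        have hφPz : φ (P z) = ∑ i, (ψ i z) * φ (xv i) := by
          rw [hPz z, map_sum]
          simp [map_smul, smul_eq_mul]
        rw [hRφz, hφPz, ← Finset.sum_sub_distrib]
        calc |∑ i, ((fi i φ) * (ψ i z) - (ψ i z) * φ (xv i))|
            ≤ ∑ i, |(fi i φ) * (ψ i z) - (ψ i z) * φ (xv i)| := Finset.abs_sum_le_sum_abs _ _
        _ ≤ ∑ i, ‖ψ i‖ * δf i * ‖z‖ := by
            apply Finset.sum_le_sum
            intro i _
            have : (fi i φ) * (ψ i z) - (ψ i z) * φ (xv i)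
                = (ψ i z) * ((fi i φ) - φ (xv i)) := by ring
            rw [this, abs_mul]
            have h1 : |ψ i z| ≤ ‖ψ i‖ * ‖z‖ := (ψ i).le_opNorm z
            have h2 : |(fi i φ) - φ (xv i)| ≤ δf i := hxv i φ hφA
            calc |ψ i z| * |(fi i φ) - φ (xv i)| ≤ (‖ψ i‖ * ‖z‖) * δf i := by
                  apply mul_le_mul h1 h2 (abs_nonneg _)
                  positivity
            _ = ‖ψ i‖ * δf i * ‖z‖ := by ring
        _ = (∑ i, ‖ψ i‖ * δf i) * ‖z‖ := by rw [Finset.sum_mul]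
        _ ≤ ε' * ‖z‖ := mul_le_mul_of_nonneg_right hsum (norm_nonneg z)
      have e3 : |φ z - φ (P z)| ≤ 2 * ε' * ‖z‖ := by
        calc |φ z - φ (P z)| = |(φ z - R φ z) + (R φ z - φ (P z))| := by ring_nf
        _ ≤ |φ z - R φ z| + |R φ z - φ (P z)| := abs_add_le _ _
        _ ≤ ε' * ‖z‖ + ε' * ‖z‖ := add_le_add e1 e2
        _ = 2 * ε' * ‖z‖ := by ring
      have hyTF : y (T z - F z) = ‖y‖ * (φ z - φ (P z)) := by
        have : y = ‖y‖ • y1 := by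
          rw [hy1, smul_smul, mul_inv_cancel₀ hyn.ne', one_smul]
        conv_lhs => rw [this]
        rw [ContinuousLinearMap.smul_apply, smul_eq_mul, map_sub]
        congr 2
      rw [hyTF]
      rw [norm_mul] -- ‖ ‖y‖ * (...) ‖
      rw [Real.norm_eq_abs, Real.norm_eq_abs, abs_of_pos hyn]
      calc ‖y‖ * |φ z - φ (P z)| ≤ ‖y‖ * (2 * ε' * ‖z‖) :=
            mul_le_mul_of_nonneg_left e3 hyn.le
      _ = 2 * ε' * ‖z‖ * ‖y‖ := by ring
  -- finite dimensional target
  set Z₀ : Submodule ℝ Y := (Submodule.span ℝ (Set.range xv)).map (T : X →ₗ[ℝ] Y) with hZ₀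
  haveI : FiniteDimensional ℝ (Submodule.span ℝ (Set.range xv)) :=
    FiniteDimensional.span_of_finite ℝ (Set.finite_range xv)
  haveI : FiniteDimensional ℝ Z₀ := Module.Finite.map _ _
  have hFZ : ∀ z : X, F z ∈ Z₀ := by
    intro z
    refine ⟨P z, ?_, rfl⟩
    rw [hPz z]
    exact Submodule.sum_mem _ fun i _ =>
      Submodule.smul_mem _ _ (Submodule.subset_span ⟨i, rfl⟩)
  set F₀ : X →L[ℝ] Z₀ := F.codRestrict Z₀ hFZ with hF₀
  obtain ⟨S₀, hS₀NA, hS₀d⟩ := Metric.mem_closure_iff.1 (hA ↥Z₀ F₀) ε' hε'pos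
  set S : X →L[ℝ] Y := (Z₀.subtypeL).comp S₀ with hS
  have hSpt : ∀ z : X, ‖S z‖ = ‖S₀ z‖ := fun z => rfl
  have hSnorm : ‖S‖ = ‖S₀‖ := by
    apply le_antisymm
    · apply ContinuousLinearMap.opNorm_le_bound _ (norm_nonneg S₀)
      intro z; rw [hSpt z]; exact S₀.le_opNorm z
    · apply ContinuousLinearMap.opNorm_le_bound _ (norm_nonneg S)
      intro z; rw [← hSpt z]; exact S.le_opNorm z
  have hSNA : NormAttaining S := by
    obtain ⟨xhat, hx1, hx2⟩ := hS₀NA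
    exact ⟨xhat, hx1, by rw [hSpt xhat, hx2, hSnorm]⟩
  have hScompact : IsCompactOperator S := by
    refine ⟨(Z₀.subtypeL) '' Metric.closedBall 0 ‖S₀‖,
      (isCompact_closedBall _ _).image (Z₀.subtypeL).continuous, ?_⟩
    apply Filter.mem_of_superset (Metric.ball_mem_nhds (0:X) one_pos)
    intro z hz
    rw [Metric.mem_ball, dist_zero_right] at hz
    refine ⟨S₀ z, ?_, rfl⟩
    rw [Metric.mem_closedBall, dist_zero_right]
    calc ‖S₀ z‖ ≤ ‖S₀‖ * ‖z‖ := S₀.le_opNorm z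
    _ ≤ ‖S₀‖ * 1 := mul_le_mul_of_nonneg_left hz.le (norm_nonneg _)
    _ = ‖S₀‖ := mul_one _
  have hFS : ‖F - S‖ ≤ ε' := by
    apply ContinuousLinearMap.opNorm_le_bound _ hε'pos.le
    intro z
    have : ‖F z - S z‖ = ‖F₀ z - S₀ z‖ := rfl
    rw [ContinuousLinearMap.sub_apply, this]
    calc ‖F₀ z - S₀ z‖ = ‖(F₀ - S₀) z‖ := by rw [ContinuousLinearMap.sub_apply]
    _ ≤ ‖F₀ - S₀‖ * ‖z‖ := (F₀ - S₀).le_opNorm z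
    _ ≤ ε' * ‖z‖ := by
        apply mul_le_mul_of_nonneg_right _ (norm_nonneg z)
        have h := hS₀d
        rw [dist_eq_norm] at h
        exact h.le
  refine ⟨S, ⟨hScompact, hSNA⟩, ?_⟩
  rw [dist_eq_norm]
  calc ‖T - S‖ = ‖(T - F) + (F - S)‖ := by rw [sub_add_sub_cancel]
  _ ≤ ‖T - F‖ + ‖F - S‖ := norm_add_le _ _
  _ ≤ 2 * ε' + ε' := add_le_add hTF hFS
  _ < ε := by rw [hε']; linarith
end

section
/- Let Y be a real Banach space with property β; that is, suppose there exist an index set I, families (y_i)_{i∈I} in the unit sphere of Y and (y*_i)_{i∈I} in the unit sphere of Y*, and a constant 0 ≤ ρ < 1 such that: (i) y*_i(y_i) = 1 for all i ∈ I; (ii) |y*_i(y_j)| ≤ ρ whenever i ≠ j; (iii) ‖y‖ = sup_{i∈I} |y*_i(y)| for every y ∈ Y. Then Y has property B^k: for every real Banach space X, every compact bounded linear operator T : X → Y with ‖T‖ = 1 and every ε > 0, there is a norm attaining compact bounded linear operator S : X → Y with ‖T − S‖ < ε. -/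
open Filter Topology Set in
/-- A weak form of Ekeland's variational principle for continuous nonnegative
functions on a Banach space. -/
lemma ekeland_weak {X : Type*} [NormedAddCommGroup X] [NormedSpace ℝ X] [CompleteSpace X]
    (φ : X → ℝ) (hc : Continuous φ) (h0 : ∀ x, 0 ≤ φ x) {ε : ℝ} (hε : 0 < ε) (u : X) :
    ∃ v : X, ε * ‖v - u‖ ≤ φ u - φ v ∧ ∀ x, φ v - ε * ‖x - v‖ ≤ φ x := by
  set rel : X → X → Prop := fun a b => ε * ‖b - a‖ ≤ φ a - φ b with hrel
  have hrefl : ∀ a, rel a a := by intro a; simp [hrel]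
  have htrans : ∀ a b c, rel a b → rel b c → rel a c := by
    intro a b c h1 h2
    have hn : ‖c - a‖ ≤ ‖c - b‖ + ‖b - a‖ := norm_sub_le_norm_sub_add_norm_sub c b a
    have := mul_le_mul_of_nonneg_left hn hε.le
    simp only [hrel] at *
    nlinarith
  set m : X → ℝ := fun a => sInf (φ '' {b | rel a b}) with hm
  have hne : ∀ a, (φ '' {b | rel a b}).Nonempty := fun a => ⟨φ a, a, hrefl a, rfl⟩
  have hbdd : ∀ a, BddBelow (φ '' {b | rel a b}) := by
    intro a; exact ⟨0, by rintro r ⟨b, -, rfl⟩; exact h0 b⟩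
  have hm_le : ∀ a b, rel a b → m a ≤ φ b := by
    intro a b hb; exact csInf_le (hbdd a) ⟨b, hb, rfl⟩
  have H : ∀ a, ∃ b, rel a b ∧ φ b ≤ (m a + φ a) / 2 := by
    intro a
    rcases eq_or_lt_of_le (hm_le a a (hrefl a)) with h | h
    · exact ⟨a, hrefl a, by linarith⟩
    · obtain ⟨r, ⟨b, hb, rfl⟩, hr⟩ := exists_lt_of_csInf_lt (hne a) (by linarith : m a < (m a + φ a)/2)
      exact ⟨b, hb, hr.le⟩
  set seq : ℕ → X := fun n => Nat.rec u (fun _ x => (H x).choose) n with hseq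
  have hstep : ∀ n, rel (seq n) (seq (n+1)) ∧ φ (seq (n+1)) ≤ (m (seq n) + φ (seq n)) / 2 :=
    fun n => (H (seq n)).choose_spec
  have hchain : ∀ n k, rel (seq n) (seq (n + k)) := by
    intro n k
    induction k with
    | zero => exact hrefl _
    | succ k ih => exact htrans _ _ _ ih (hstep (n + k)).1
  have hmono : ∀ n k, n ≤ k → rel (seq n) (seq k) := by
    intro n k hnk
    obtain ⟨j, rfl⟩ := Nat.exists_eq_add_of_le hnk
    exact hchain n j
  have hφle : ∀ a b, rel a b → φ b ≤ φ a := by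
    intro a b h
    have := mul_nonneg hε.le (norm_nonneg (b - a))
    simp only [hrel] at h
    linarith
  have hanti : Antitone (fun n => φ (seq n)) := by
    intro n k hnk; exact hφle _ _ (hmono n k hnk)
  have hbdd2 : BddBelow (Set.range fun n => φ (seq n)) := ⟨0, by rintro r ⟨n, rfl⟩; exact h0 _⟩
  set L : ℝ := ⨅ n, φ (seq n) with hL
  have hLtend : Tendsto (fun n => φ (seq n)) atTop (𝓝 L) := tendsto_atTop_ciInf hanti hbdd2
  have hLle : ∀ n, L ≤ φ (seq n) := fun n => ciInf_le hbdd2 n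
  -- Cauchy
  have hdist : ∀ n k, n ≤ k → dist (seq n) (seq k) ≤ (φ (seq n) - L) / ε := by
    intro n k hnk
    have h := hmono n k hnk
    simp only [hrel] at h
    rw [dist_eq_norm, norm_sub_rev]
    rw [le_div_iff₀ hε]
    have := hLle k
    nlinarith
  have hcauchy : CauchySeq seq := by
    apply cauchySeq_of_le_tendsto_0 (b := fun n => (φ (seq n) - L) / ε)
    · intro n k N hn hk
      rcases le_total n k with h | h
      · exact (hdist n k h).trans (by
          have := hanti hn
          have := hLle k
          gcongr)
      · rw [dist_comm]
        exact (hdist k n h).trans (by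
          have := hanti hk
          gcongr)
    · have : Tendsto (fun n => (φ (seq n) - L) / ε) atTop (𝓝 ((L - L) / ε)) :=
        (hLtend.sub tendsto_const_nhds).div_const ε
      simpa using this
  obtain ⟨v, hv⟩ := cauchySeq_tendsto_of_complete hcauchy
  have hφv : φ v = L := tendsto_nhds_unique ((hc.tendsto v).comp hv) hLtend
  have hrelv : ∀ n, rel (seq n) v := by
    intro n
    have h1 : Tendsto (fun k => ε * ‖seq k - seq n‖) atTop (𝓝 (ε * ‖v - seq n‖)) :=
      (((hv.sub tendsto_const_nhds).norm).const_mul ε)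
    have h2 : Tendsto (fun k => φ (seq n) - φ (seq k)) atTop (𝓝 (φ (seq n) - L)) :=
      tendsto_const_nhds.sub hLtend
    have h3 : ε * ‖v - seq n‖ ≤ φ (seq n) - L := by
      refine le_of_tendsto_of_tendsto h1 h2 ?_
      filter_upwards [eventually_ge_atTop n] with k hk
      exact hmono n k hk
    simp only [hrel]
    rw [hφv]
    exact h3
  refine ⟨v, ?_, ?_⟩
  · have := hrelv 0
    exact this
  · intro x
    by_contra hcon
    push_neg at hcon
    have hrvx : rel v x := by
      simp only [hrel]; linarith
    have hrx : ∀ n, rel (seq n) x := fun n => htrans _ _ _ (hrelv n) hrvx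
    have hmx : ∀ n, m (seq n) ≤ φ x := fun n => hm_le _ _ (hrx n)
    have hfx : ∀ n, φ (seq (n+1)) ≤ (φ x + φ (seq n)) / 2 := by
      intro n
      have := (hstep n).2
      have := hmx n
      linarith
    have h1 : Tendsto (fun n => φ (seq (n+1))) atTop (𝓝 L) := hLtend.comp (tendsto_add_atTop_nat 1)
    have h2 : Tendsto (fun n => (φ x + φ (seq n)) / 2) atTop (𝓝 ((φ x + L) / 2)) :=
      (tendsto_const_nhds.add hLtend).div_const 2
    have h3 : L ≤ (φ x + L) / 2 := le_of_tendsto_of_tendsto h1 h2 (Eventually.of_forall hfx)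
    have h4 : φ v ≤ φ x := by rw [hφv]; linarith
    have h5 := mul_nonneg hε.le (norm_nonneg (x - v))
    linarith

open Filter Topology Set in
set_option maxHeartbeats 1000000 in
/-- A quantitative Bishop–Phelps-type lemma. -/
lemma bishop_phelps_aux {X : Type*} [NormedAddCommGroup X] [NormedSpace ℝ X] [CompleteSpace X]
    (f : X →L[ℝ] ℝ) (hf1 : ‖f‖ ≤ 1) {δ : ℝ} (hδ0 : 0 < δ) (hδ1 : δ ≤ 1/2)
    (hf2 : 1 - δ^2/2 < ‖f‖) :
    ∃ (g : X →L[ℝ] ℝ) (x0 : X), ‖x0‖ = 1 ∧ ‖g‖ = 1 ∧ g x0 = 1 ∧ ‖f - g‖ ≤ δ/2 := by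
  -- find an almost-maximizing point u
  obtain ⟨u0, hu0, hu0'⟩ := f.exists_lt_apply_of_lt_opNorm hf2
  have hfu0 : 1 - δ^2/2 < |f u0| := by rwa [Real.norm_eq_abs] at hu0'
  set u : X := if 0 ≤ f u0 then u0 else -u0 with hu
  clear_value u
  have hfu : 1 - δ^2/2 < f u := by
    rcases le_or_gt 0 (f u0) with h | h
    · rw [hu, if_pos h]; rwa [abs_of_nonneg h] at hfu0
    · rw [hu, if_neg (not_le.2 h), map_neg]; rw [abs_of_neg h] at hfu0; linarith
  have hunorm : ‖u‖ < 1 := by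
    rcases le_or_gt 0 (f u0) with h | h
    · rw [hu, if_pos h]; exact hu0
    · rw [hu, if_neg (not_le.2 h), norm_neg]; exact hu0
  set φ : X → ℝ := fun x => ‖x‖ - f x with hφ
  clear_value φ
  have hφc : Continuous φ := by rw [hφ]; exact continuous_norm.sub f.continuous
  have hφ0 : ∀ x, 0 ≤ φ x := by
    intro x
    have h1 : f x ≤ |f x| := le_abs_self _
    have h2 : |f x| ≤ ‖f‖ * ‖x‖ := by
      have := f.le_opNorm x
      rwa [Real.norm_eq_abs] at this
    have h3 : ‖f‖ * ‖x‖ ≤ 1 * ‖x‖ := mul_le_mul_of_nonneg_right hf1 (norm_nonneg x)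
    simp only [hφ]
    nlinarith
  have hε2 : (0:ℝ) < δ/2 := by linarith
  obtain ⟨v, hv1, hv2⟩ := ekeland_weak φ hφc hφ0 hε2 u
  have hunorm' : 1 - δ^2/2 < ‖u‖ := by
    have h2 : |f u| ≤ ‖f‖ * ‖u‖ := by
      have := f.le_opNorm u; rwa [Real.norm_eq_abs] at this
    have h3 : ‖f‖ * ‖u‖ ≤ 1 * ‖u‖ := mul_le_mul_of_nonneg_right hf1 (norm_nonneg u)
    have := le_abs_self (f u)
    nlinarith
  have hφu : φ u < δ^2/2 := by
    simp only [hφ]; linarith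
  have hvu : ‖v - u‖ < δ := by
    have h1 : (0:ℝ) ≤ φ v := hφ0 v
    have h2 : (δ/2) * ‖v - u‖ < δ^2/2 := lt_of_le_of_lt hv1 (by linarith)
    nlinarith [norm_nonneg (v - u)]
  have hvnorm : 3/8 < ‖v‖ := by
    have := norm_sub_norm_le v u
    have h1 : ‖u‖ - ‖v‖ ≤ ‖u - v‖ := norm_sub_norm_le u v
    have h2 : ‖u - v‖ = ‖v - u‖ := norm_sub_rev u v
    nlinarith
  have hv0 : v ≠ 0 := by
    intro h; rw [h, norm_zero] at hvnorm; linarith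
  -- sandwich setup
  set p : X → ℝ := fun w => ‖v + w‖ - ‖v‖ with hp
  clear_value p
  set q : X → ℝ := fun w => f w - (δ/2) * ‖w‖ with hq
  clear_value q
  have hqp : ∀ w, q w ≤ p w := by
    intro w
    have := hv2 (v + w)
    simp only [hφ] at this
    rw [map_add] at this
    have hn : ‖v + w - v‖ = ‖w‖ := by rw [add_sub_cancel_left]
    rw [hn] at this
    simp only [hq, hp]
    linarith
  have hpconv : ConvexOn ℝ (univ : Set X) p := by
    have h1 : ConvexOn ℝ (univ : Set X) (fun z : X => dist z (-v)) := convexOn_univ_dist (-v)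
    have h2 : ConvexOn ℝ (univ : Set X) ((fun z : X => dist z (-v)) - fun _ => ‖v‖) :=
      h1.sub (concaveOn_const _ convex_univ)
    convert h2 using 1
    funext w
    simp only [hp, Pi.sub_apply, dist_eq_norm, sub_neg_eq_add, add_comm]
  have hqconc : ConcaveOn ℝ (univ : Set X) q := by
    have hlin : ConcaveOn ℝ (univ : Set X) (fun w : X => f w) := by
      refine ⟨convex_univ, ?_⟩
      intro x _ z _ a b _ _ _
      simp only [map_add, map_smul, smul_eq_mul]
      exact le_refl _
    have hnorm : ConvexOn ℝ (univ : Set X) ((δ/2) • (norm : X → ℝ)) :=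
      convexOn_univ_norm.smul (by linarith)
    have h2 : ConcaveOn ℝ (univ : Set X) ((fun w : X => f w) - (δ/2) • (norm : X → ℝ)) :=
      hlin.sub hnorm
    convert h2 using 1
    rw [hq]; funext w; simp [smul_eq_mul]

  set A : Set (X × ℝ) := {pr | pr.1 ∈ univ ∧ p pr.1 < pr.2} with hA
  clear_value A
  set B : Set (X × ℝ) := {pr | pr.1 ∈ univ ∧ pr.2 ≤ q pr.1} with hB
  clear_value B
  have hAconv : Convex ℝ A := by rw [hA]; exact hpconv.convex_strict_epigraph
  have hBconv : Convex ℝ B := by rw [hB]; exact hqconc.convex_hypograph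
  have hAopen : IsOpen A := by
    have : A = {pr : X × ℝ | p pr.1 < pr.2} := by ext pr; simp [hA]
    rw [this]
    have hpc : Continuous p := by
      rw [hp]; exact ((continuous_const.add continuous_id).norm).sub continuous_const
    exact isOpen_lt (hpc.comp continuous_fst) continuous_snd
  have hdisj : Disjoint A B := by
    rw [Set.disjoint_left, hA, hB]
    rintro pr ⟨-, h1⟩ ⟨-, h2⟩
    have := hqp pr.1
    linarith
  obtain ⟨F, c, hFA, hFB⟩ := geometric_hahn_banach_open hAconv hAopen hBconv hdisj
  set β : ℝ := F (0, 1) with hβ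
  clear_value β
  have hF : ∀ (w : X) (t : ℝ), F (w, t) = F (w, 0) + t * β := by
    intro w t
    have : (w, t) = (w, (0:ℝ)) + t • ((0:X), (1:ℝ)) := by
      simp [Prod.ext_iff]
    rw [this, map_add, map_smul, smul_eq_mul, hβ]
  have hA_mem : ∀ (w : X) (t : ℝ), p w < t → F (w, 0) + t * β < c := by
    intro w t h
    have := hFA (w, t) (by rw [hA]; exact ⟨mem_univ _, h⟩)
    rwa [hF] at this
  have hB_mem : ∀ (w : X) (t : ℝ), t ≤ q w → c ≤ F (w, 0) + t * β := by
    intro w t h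
    have := hFB (w, t) (by rw [hB]; exact ⟨mem_univ _, h⟩)
    rwa [hF] at this
  have hF00 : F ((0:X), (0:ℝ)) = 0 := by
    have : ((0:X), (0:ℝ)) = (0 : X × ℝ) := rfl
    rw [this, map_zero]
  have hp0 : p 0 = 0 := by simp [hp]
  have hq0 : q 0 = 0 := by simp [hq]
  have key : ∀ r : ℝ, (∀ t : ℝ, 0 < t → t * r < c) → r ≤ 0 := by
    intro r h
    by_contra h'
    push_neg at h'
    have ht : 0 < (max c 0 + 1) / r := by positivity
    have := h _ ht
    rw [div_mul_cancel₀ _ (ne_of_gt h')] at this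
    have := le_max_left c 0
    linarith [le_max_left c 0]
  have hβneg : β < 0 := by
    have hβle : β ≤ 0 := by
      apply key
      intro t ht
      have := hA_mem 0 t (by rw [hp0]; exact ht)
      rw [hF00] at this
      linarith
    rcases lt_or_eq_of_le hβle with h | h
    · exact h
    · exfalso
      -- β = 0 leads to contradiction
      have hFw : ∀ w : X, F (w, 0) < c := by
        intro w
        have := hA_mem w (p w + 1) (by linarith)
        rw [h, mul_zero, add_zero] at this
        exact this
      have hFw0 : ∀ w : X, F (w, 0) ≤ 0 := by
        intro w
        apply key
        intro t ht
        have hsmul : ((t • w : X), (0:ℝ)) = t • ((w, (0:ℝ)) : X × ℝ) := by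
          simp [Prod.ext_iff]
        have := hFw (t • w)
        rw [hsmul, map_smul, smul_eq_mul] at this
        linarith [this]
      have hFweq : ∀ w : X, F (w, 0) = 0 := by
        intro w
        have h1 := hFw0 w
        have h2 := hFw0 (-w)
        have hneg : ((-w : X), (0:ℝ)) = -((w, (0:ℝ)) : X × ℝ) := by simp [Prod.ext_iff]
        rw [hneg, map_neg] at h2
        linarith
      have hc1 : 0 < c := by
        have := hA_mem 0 1 (by rw [hp0]; norm_num)
        rw [hF00, ← h] at this
        linarith
      have hc2 : c ≤ 0 := by
        have := hB_mem 0 0 (by rw [hq0])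
        rw [hF00] at this
        linarith
      linarith
  have hc0 : c = 0 := by
    have hc2 : c ≤ 0 := by
      have := hB_mem 0 0 (by rw [hq0])
      rw [hF00] at this
      linarith
    rcases lt_or_eq_of_le hc2 with h | h
    · exfalso
      have ht : 0 < c / (2 * β) := div_pos_of_neg_of_neg h (by linarith)
      have := hA_mem 0 (c / (2*β)) (by rw [hp0]; exact ht)
      rw [hF00] at this
      have hβ0 : β ≠ 0 := ne_of_lt hβneg
      have hcalc : c / (2*β) * β = c / 2 := by
        field_simp
      rw [hcalc] at this
      linarith
    · exact h
  have hup : ∀ w : X, F (w, 0) ≤ (-β) * p w := by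
    intro w
    by_contra h'
    push_neg at h'
    have hbpos : 0 < -β := by linarith
    have ht : p w < F (w, 0) / (-β) := by
      rw [lt_div_iff₀ hbpos]
      nlinarith
    have := hA_mem w _ ht
    rw [hc0] at this
    have hcalc : F (w, 0) / (-β) * β = -F (w, 0) := by
      field_simp
      rw [mul_div_assoc, div_self (ne_of_lt hβneg), mul_one]
    rw [hcalc] at this
    linarith
  have hlo : ∀ w : X, (-β) * q w ≤ F (w, 0) := by
    intro w
    have := hB_mem w (q w) le_rfl
    rw [hc0] at this
    nlinarith
  set g : X →L[ℝ] ℝ := (-β)⁻¹ • (F.comp (ContinuousLinearMap.inl ℝ X ℝ)) with hg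
  clear_value g
  have hgapp : ∀ w : X, g w = (-β)⁻¹ * F (w, 0) := by
    intro w
    rw [hg]
    simp only [ContinuousLinearMap.smul_apply, ContinuousLinearMap.coe_comp',
      Function.comp_apply, ContinuousLinearMap.inl_apply, smul_eq_mul]
  have hbpos : 0 < -β := by linarith
  have hbinv : 0 < (-β)⁻¹ := inv_pos.2 hbpos
  have hbmul : (-β)⁻¹ * (-β) = 1 := inv_mul_cancel₀ (ne_of_gt hbpos)
  have hg_between : ∀ w : X, q w ≤ g w ∧ g w ≤ p w := by
    intro w
    constructor
    · rw [hgapp]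
      have h' := mul_le_mul_of_nonneg_left (hlo w) hbinv.le
      rw [← mul_assoc, hbmul, one_mul] at h'
      linarith
    · rw [hgapp]
      have h' := mul_le_mul_of_nonneg_left (hup w) hbinv.le
      rw [← mul_assoc, hbmul, one_mul] at h'
      linarith
  have hg_abs : ∀ w : X, |g w| ≤ ‖w‖ := by
    intro w
    rw [abs_le]
    constructor
    · have h1 := (hg_between (-w)).2
      have h2 : p (-w) ≤ ‖w‖ := by
        simp only [hp]
        have := norm_add_le v (-w)
        rw [norm_neg] at this
        linarith
      rw [map_neg] at h1
      linarith
    · have h1 := (hg_between w).2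
      have h2 : p w ≤ ‖w‖ := by
        simp only [hp]
        have := norm_add_le v w
        linarith
      linarith
  have hgle1 : ‖g‖ ≤ 1 := by
    apply ContinuousLinearMap.opNorm_le_bound _ zero_le_one
    intro w
    rw [Real.norm_eq_abs, one_mul]
    exact hg_abs w
  have hgv : g v = ‖v‖ := by
    have h1 : g (-v) ≤ p (-v) := (hg_between (-v)).2
    have h2 : p (-v) = -‖v‖ := by simp [hp]
    rw [map_neg, h2] at h1
    have h3 : g v ≤ |g v| := le_abs_self _
    have h4 := hg_abs v
    linarith [abs_le.1 h4]
  set x0 : X := ‖v‖⁻¹ • v with hx0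
  clear_value x0
  have hvpos : 0 < ‖v‖ := by linarith
  have hx0norm : ‖x0‖ = 1 := by
    rw [hx0, norm_smul, Real.norm_eq_abs, abs_of_pos (inv_pos.2 hvpos), inv_mul_cancel₀ (ne_of_gt hvpos)]
  have hgx0 : g x0 = 1 := by
    rw [hx0, map_smul, smul_eq_mul, hgv, inv_mul_cancel₀ (ne_of_gt hvpos)]
  have hgnorm : ‖g‖ = 1 := by
    refine le_antisymm hgle1 ?_
    have h1 : |g x0| ≤ ‖g‖ * ‖x0‖ := by
      have := g.le_opNorm x0; rwa [Real.norm_eq_abs] at this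
    rw [hgx0, hx0norm, mul_one] at h1
    simpa using h1
  have hfg : ‖f - g‖ ≤ δ/2 := by
    apply ContinuousLinearMap.opNorm_le_bound _ (by linarith)
    intro w
    rw [ContinuousLinearMap.sub_apply, Real.norm_eq_abs, abs_le]
    constructor
    · have h1 := (hg_between (-w)).1
      simp only [hq] at h1
      rw [map_neg, map_neg, norm_neg] at h1
      linarith
    · have h1 := (hg_between w).1
      simp only [hq] at h1
      linarith
  exact ⟨g, x0, hx0norm, hgnorm, hgx0, hfg⟩

open Filter Topology Set in
set_option maxHeartbeats 4000000 in
/-- (Lindenstrauss) Property β implies property B^k: if `Y` has property β (witnessed by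
families `(y i)` in `S_Y`, `(y' i)` in `S_{Y*}` and a constant `0 ≤ ρ < 1` with
`y' i (y i) = 1`, `|y' i (y j)| ≤ ρ` for `i ≠ j`, and `‖y‖ = sup_i |y' i y|` for all `y`),
then for every real Banach space `X`, every compact operator `T : X → Y` of norm one and every
`ε > 0` there is a norm attaining compact operator `S : X → Y` with `‖T - S‖ < ε`. -/
theorem stmt_18 (Y : Type*) [NormedAddCommGroup Y] [NormedSpace ℝ Y] [CompleteSpace Y]
    (I : Type*) (y : I → Y) (y' : I → StrongDual ℝ Y) (ρ : ℝ)
    (hρ₀ : 0 ≤ ρ) (hρ₁ : ρ < 1)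
    (hy : ∀ i, ‖y i‖ = 1) (hy' : ∀ i, ‖y' i‖ = 1)
    (h1 : ∀ i, y' i (y i) = 1)
    (h2 : ∀ i j, i ≠ j → |y' i (y j)| ≤ ρ)
    (h3 : ∀ z : Y, IsLUB {r : ℝ | ∃ i, r = |y' i z|} ‖z‖) :
    ∀ (X : Type) [NormedAddCommGroup X] [NormedSpace ℝ X] [CompleteSpace X],
      ∀ T : X →L[ℝ] Y, IsCompactOperator T → ‖T‖ = 1 → ∀ ε : ℝ, 0 < ε →
        ∃ S : X →L[ℝ] Y, IsCompactOperator S ∧ NormAttaining S ∧ ‖T - S‖ < ε := by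
  intro X _ _ _ T hTc hT1 ε hε
  have hρ1' : 0 < 1 - ρ := by linarith
  set δ : ℝ := min (1/2) ((1 - ρ) * ε / 2) with hδdef
  have hδ0 : 0 < δ := lt_min (by norm_num) (by positivity)
  have hδhalf : δ ≤ 1/2 := min_le_left _ _
  have hδε : δ ≤ (1 - ρ) * ε / 2 := min_le_right _ _
  set η : ℝ := δ / (2 * (1 - ρ)) with hηdef
  have hη0 : 0 < η := by positivity
  clear_value δ
  clear_value η
  -- we do not clear_value η since it is defined from δ
  -- find x with ‖x‖ < 1 and ‖T x‖ large
  have hq : (0:ℝ) < δ^2/4 := by positivity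
  obtain ⟨x, hx1, hx2⟩ := T.exists_lt_apply_of_lt_opNorm (show 1 - δ^2/4 < ‖T‖ by rw [hT1]; linarith)
  -- find i with |y' i (T x)| large
  obtain ⟨r, ⟨i, hi⟩, hr1, hr2⟩ := (h3 (T x)).exists_between
    (show 1 - δ^2/2 < ‖T x‖ by nlinarith)
  set f : X →L[ℝ] ℝ := (y' i).comp T with hf
  have hf1 : ‖f‖ ≤ 1 := by
    rw [hf]
    calc ‖(y' i).comp T‖ ≤ ‖y' i‖ * ‖T‖ := ContinuousLinearMap.opNorm_comp_le _ _
    _ = 1 := by rw [hy' i, hT1, mul_one]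
  clear_value f
  have hfx : f x = y' i (T x) := by rw [hf]; rfl
  have hf2 : 1 - δ^2/2 < ‖f‖ := by
    have habs : |f x| ≤ ‖f‖ * ‖x‖ := by
      have := f.le_opNorm x; rwa [Real.norm_eq_abs] at this
    have hfnn : 0 ≤ ‖f‖ := norm_nonneg _
    have h' : ‖f‖ * ‖x‖ ≤ ‖f‖ := by nlinarith [norm_nonneg x]
    rw [hfx] at habs
    rw [← hi] at *
    linarith
  obtain ⟨g, x0, hx0n, hgn, hgx0, hfg⟩ := bishop_phelps_aux f hf1 hδ0 hδhalf hf2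
  set c : X →L[ℝ] ℝ := (1 + η) • g - f with hc
  have hcapp : ∀ z : X, c z = (1 + η) * g z - f z := by
    intro z
    rw [hc]
    simp [ContinuousLinearMap.sub_apply, ContinuousLinearMap.smul_apply, smul_eq_mul]
  have hcnorm : ‖c‖ ≤ δ/2 + η := by
    have hceq : c = (g - f) + η • g := by
      rw [hc]; ext z; simp [ContinuousLinearMap.sub_apply, ContinuousLinearMap.add_apply,
        ContinuousLinearMap.smul_apply, smul_eq_mul]; ring
    rw [hceq]
    calc ‖(g - f) + η • g‖ ≤ ‖g - f‖ + ‖η • g‖ := norm_add_le _ _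
    _ ≤ δ/2 + η := by
        have hns : ‖η • g‖ = |η| * ‖g‖ := by
          rw [← Real.norm_eq_abs]; exact norm_smul η g
        rw [hns, abs_of_pos hη0, hgn, mul_one, norm_sub_rev]
        linarith
  set S : X →L[ℝ] Y := T + c.smulRight (y i) with hS
  have hSapp : ∀ z : X, S z = T z + c z • y i := by
    intro z; rw [hS]; simp [ContinuousLinearMap.add_apply, ContinuousLinearMap.smulRight_apply]
  clear_value S c
  -- compactness
  have hScomp : IsCompactOperator (⇑S) := by
    have hr1 : IsCompactOperator (⇑(c.smulRight (y i))) := by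
      refine ⟨(fun t : ℝ => t • (y i)) '' (Set.Icc (-(‖c‖+1)) (‖c‖+1)), ?_, ?_⟩
      · exact isCompact_Icc.image (continuous_id.smul continuous_const)
      · have hsub : Metric.ball (0:X) 1 ⊆ (⇑(c.smulRight (y i))) ⁻¹'
            ((fun t : ℝ => t • (y i)) '' (Set.Icc (-(‖c‖+1)) (‖c‖+1))) := by
          intro z hz
          rw [Metric.mem_ball, dist_zero_right] at hz
          refine ⟨c z, ?_, rfl⟩
          have h' : |c z| ≤ ‖c‖ * ‖z‖ := by
            have := c.le_opNorm z; rwa [Real.norm_eq_abs] at this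
          have h'' : ‖c‖ * ‖z‖ ≤ ‖c‖ * 1 := by
            have := norm_nonneg c; nlinarith
          rw [Set.mem_Icc]
          constructor <;> nlinarith [abs_le.1 h'|>.1, abs_le.1 h'|>.2]
        exact Filter.mem_of_superset (Metric.ball_mem_nhds 0 one_pos) hsub
    have : (⇑S) = (⇑T) + (⇑(c.smulRight (y i))) := by
      funext z; rw [hSapp]; simp [ContinuousLinearMap.smulRight_apply]
    rw [this]
    exact hTc.add hr1
  -- key pointwise identity
  have hySi : ∀ z : X, y' i (S z) = (1 + η) * g z := by
    intro z
    rw [hSapp, map_add, map_smul, h1 i, smul_eq_mul, mul_one, hcapp]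
    have : (y' i) (T z) = f z := by rw [hf]; rfl
    rw [this]; ring
  have hkey : ρ * (δ/2 + η) ≤ η := by
    have hηeq : η * (1 - ρ) = δ / 2 := by
      rw [hηdef]; field_simp
    nlinarith
  -- norm bound on S
  have hSbound : ∀ z : X, ‖S z‖ ≤ (1 + η) * ‖z‖ := by
    intro z
    refine (h3 (S z)).2 ?_
    rintro r ⟨k, rfl⟩
    by_cases hk : k = i
    · subst hk
      rw [hySi, abs_mul, abs_of_pos (by linarith : (0:ℝ) < 1 + η)]
      have : |g z| ≤ ‖z‖ := by
        have := g.le_opNorm z; rw [Real.norm_eq_abs, hgn, one_mul] at this; exact this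
      nlinarith
    · have hSz : y' k (S z) = y' k (T z) + c z * y' k (y i) := by
        rw [hSapp, map_add, map_smul, smul_eq_mul]
      rw [hSz]
      have e1 : |y' k (T z)| ≤ ‖z‖ := by
        have h' := (y' k).le_opNorm (T z)
        rw [Real.norm_eq_abs, hy' k, one_mul] at h'
        have h'' := T.le_opNorm z
        rw [hT1, one_mul] at h''
        linarith
      have e2 : |c z * y' k (y i)| ≤ (δ/2 + η) * ρ * ‖z‖ := by
        rw [abs_mul]
        have f1 : |c z| ≤ (δ/2 + η) * ‖z‖ := by
          have := c.le_opNorm z; rw [Real.norm_eq_abs] at this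
          nlinarith [norm_nonneg z]
        have f2 : |y' k (y i)| ≤ ρ := h2 k i hk
        nlinarith [abs_nonneg (c z), abs_nonneg (y' k (y i)), norm_nonneg z]
      calc |y' k (T z) + c z * y' k (y i)| ≤ |y' k (T z)| + |c z * y' k (y i)| := abs_add_le _ _
      _ ≤ ‖z‖ + (δ/2 + η) * ρ * ‖z‖ := by linarith
      _ ≤ (1 + η) * ‖z‖ := by nlinarith [norm_nonneg z]
  have hSle : ‖S‖ ≤ 1 + η := ContinuousLinearMap.opNorm_le_bound _ (by linarith) hSbound
  have hSx0 : ‖S x0‖ = ‖S‖ := by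
    have hlow : 1 + η ≤ ‖S x0‖ := by
      have h' : |y' i (S x0)| ≤ ‖S x0‖ := by
        have := (y' i).le_opNorm (S x0)
        rw [Real.norm_eq_abs, hy' i, one_mul] at this
        exact this
      rw [hySi, hgx0, mul_one, abs_of_pos (by linarith : (0:ℝ) < 1 + η)] at h'
      exact h'
    have hhigh : ‖S x0‖ ≤ ‖S‖ := by
      have := S.le_opNorm x0
      rw [hx0n, mul_one] at this
      exact this
    linarith
  refine ⟨S, hScomp, ⟨x0, hx0n, hSx0⟩, ?_⟩
  have hTS : ‖T - S‖ ≤ δ/2 + η := by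
    have : T - S = -(c.smulRight (y i)) := by
      rw [hS]; ext z; simp
    rw [this, norm_neg]
    calc ‖c.smulRight (y i)‖ ≤ ‖c‖ * ‖y i‖ := (c.norm_smulRight_apply (y i)).le
    _ ≤ δ/2 + η := by rw [hy i, mul_one]; exact hcnorm
  have hη4 : η ≤ ε/4 := by
    rw [hηdef]
    rw [div_le_iff₀ (by linarith : (0:ℝ) < 2 * (1 - ρ))]
    nlinarith
  have hδ4 : δ ≤ ε/2 := by nlinarith
  linarith
end
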